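/- arXiv:math/0312270 — 7 statements merged into one kernel-verified Lean document; each statement's English description precedes it below -/
import Mathlib

section
/- Fix s ≠ t with s, t > 0 and set u = √(st). Define a_n = (u + n − 1) / √((s+n−1)(t+n−1)) for n ≥ 1. Then a_n = 1 + (u − (s+t)/2)/(n−1) + O(1/(n−1)^2) as n → ∞, and since u − (s+t)/2 = √(st) − (s+t)/2 < 0, the infinite product ∏_{n≥2} a_n diverges to 0. -/
open Filter Finset

set_option maxHeartbeats 1000000 in
private lemma key_est (s t : ℝ) (hs : 0 < s) (ht : 0 < t) :
    ∃ C : ℝ, 0 ≤ C ∧ ∀ m : ℝ, 1 ≤ m →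
      |(Real.sqrt (s*t) + m) / Real.sqrt ((s+m)*(t+m))
        - (1 + (Real.sqrt (s*t) - (s+t)/2)/m)| ≤ C/m^2 := by
  set u := Real.sqrt (s*t) with hu
  set c := u - (s+t)/2 with hc
  refine ⟨|c| * (s*t + 2*(s+t) + (s+t)^2/2), by positivity, fun m hm => ?_⟩
  have hm0 : (0:ℝ) < m := by linarith
  set D := Real.sqrt ((s+m)*(t+m)) with hD
  have hD2 : D^2 = (s+m)*(t+m) := Real.sq_sqrt (by positivity)
  have hDpos : 0 < D := Real.sqrt_pos.mpr (by positivity)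
  have hu0 : 0 ≤ u := Real.sqrt_nonneg _
  have hu2 : u^2 = s*t := Real.sq_sqrt (by positivity)
  have hDm : m ≤ D := by nlinarith [hD2, hDpos]
  have hDle : D ≤ m + (s+t)/2 := by nlinarith [hD2, hDpos, sq_nonneg (s-t)]
  have hule : u ≤ (s+t)/2 := by nlinarith [sq_nonneg (s-t)]
  have hX : (u+m)/D - (1 + c/m)
      = c*(2*m^2 - D*(D+u+m)) / (m*(D*(D+u+m))) := by
    rw [eq_div_iff (by positivity)]
    field_simp
    linear_combination m * hu2 - m * hD2
  rw [hX, abs_div, abs_mul]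
  have hden : |m*(D*(D+u+m))| = m*(D*(D+u+m)) := abs_of_pos (by positivity)
  rw [hden]
  have hN : |2*m^2 - D*(D+u+m)| ≤ (s*t + 2*(s+t) + (s+t)^2/2)*m := by
    rw [abs_le]
    constructor
    · have hDE : D*(D+u+m) ≤ (m+(s+t)/2) * ((m+(s+t)/2) + (m+(s+t)/2)) :=
        mul_le_mul hDle (by linarith) (by positivity) (by positivity)
      have h1 : -(2*(s+t))*m - (s+t)^2/2 ≤ 2*m^2 - D*(D+u+m) := by nlinarith [hDE]
      have h2 : 2*(s+t)*m + (s+t)^2/2 ≤ (s*t + 2*(s+t) + (s+t)^2/2)*m := by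
        nlinarith [mul_le_mul_of_nonneg_left hm (show (0:ℝ) ≤ s*t + (s+t)^2/2 by positivity)]
      linarith
    · nlinarith [mul_le_mul hDm (show m + (u+m) ≤ D + u + m by linarith) (by positivity) hDpos.le,
        mul_nonneg (mul_pos hs ht).le hm0.le, mul_nonneg (add_pos hs ht).le hm0.le,
        mul_nonneg hu0 hm0.le]
  have hdenlb : m*(2*m^2) ≤ m*(D*(D+u+m)) := by
    nlinarith [mul_le_mul hDm (show m + m ≤ D + u + m by linarith) (by positivity) hDpos.le]
  calc |c| * |2*m^2 - D*(D+u+m)| / (m*(D*(D+u+m)))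
      ≤ |c| * ((s*t + 2*(s+t) + (s+t)^2/2)*m) / (m*(2*m^2)) :=
        div_le_div₀ (by positivity) (mul_le_mul_of_nonneg_left hN (abs_nonneg c)) (by positivity) hdenlb
    _ = |c| * (s*t + 2*(s+t) + (s+t)^2/2) / (2*m^2) := by
        field_simp
    _ ≤ |c| * (s*t + 2*(s+t) + (s+t)^2/2) / m^2 := by
        apply div_le_div₀ (by positivity) le_rfl (by positivity)
        nlinarith

private lemma sqsum_le (k : ℕ) : ∑ i ∈ range k, (1:ℝ)/((i:ℝ)+1)^2 ≤ 2 := by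
  have h : ∀ k : ℕ, ∑ i ∈ range (k+1), (1:ℝ)/((i:ℝ)+1)^2 ≤ 2 - 1/((k:ℝ)+1) := by
    intro k
    induction k with
    | zero => norm_num
    | succ k ih =>
      rw [sum_range_succ]
      push_cast
      have hk : (0:ℝ) < (k:ℝ)+1 := by positivity
      have key : (1:ℝ)/((k:ℝ)+1+1)^2 ≤ 1/((k:ℝ)+1) - 1/((k:ℝ)+1+1) := by
        rw [div_sub_div _ _ (ne_of_gt hk) (by positivity)]
        rw [div_le_div_iff₀ (by positivity) (by positivity)]
        nlinarith [sq_nonneg ((k:ℝ)+1)]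
      linarith
  match k with
  | 0 => norm_num
  | Nat.succ j =>
    have := h j
    have hp : (0:ℝ) < 1/((j:ℝ)+1) := by positivity
    linarith

private lemma harm_tendsto :
    Tendsto (fun N : ℕ => ∑ n ∈ Icc 2 N, 1/((n:ℝ)-1)) atTop atTop := by
  have heq : ∀ N : ℕ, ∑ n ∈ Icc 2 N, 1/((n:ℝ)-1)
      = ∑ i ∈ range (N-1), 1/((i:ℝ)+1) := by
    intro N
    rw [← Finset.Ico_add_one_right_eq_Icc, Finset.sum_Ico_eq_sum_range]
    have h2 : N + 1 - 2 = N - 1 := by omega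
    rw [h2]
    refine Finset.sum_congr rfl fun i _ => ?_
    congr 1
    push_cast
    ring
  simp only [heq]
  exact Real.tendsto_sum_range_one_div_nat_succ_atTop.comp (tendsto_sub_atTop_nat 1)

private lemma sqsum_Icc_le (N : ℕ) : ∑ n ∈ Icc 2 N, 1/((n:ℝ)-1)^2 ≤ 2 := by
  have heq : ∑ n ∈ Icc 2 N, 1/((n:ℝ)-1)^2 = ∑ i ∈ range (N-1), 1/((i:ℝ)+1)^2 := by
    rw [← Finset.Ico_add_one_right_eq_Icc, Finset.sum_Ico_eq_sum_range]
    have h2 : N + 1 - 2 = N - 1 := by omega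
    rw [h2]
    refine Finset.sum_congr rfl fun i _ => ?_
    congr 2
    push_cast
    ring
  rw [heq]; exact sqsum_le _

/-- Kakutani-criterion computation: with `u = √(st)` and
`a_n = (u + n − 1)/√((s+n−1)(t+n−1))`, one has
`a_n = 1 + (u − (s+t)/2)/(n−1) + O(1/(n−1)²)`, the constant `u − (s+t)/2` is negative,
and the infinite product `∏_{n≥2} a_n` diverges to `0`. -/
theorem stmt4 (s t : ℝ) (hs : 0 < s) (ht : 0 < t) (hst : s ≠ t) :
    (∃ C : ℝ, ∀ n : ℕ, 2 ≤ n →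
      |(Real.sqrt (s * t) + n - 1) / Real.sqrt ((s + n - 1) * (t + n - 1))
          - (1 + (Real.sqrt (s * t) - (s + t) / 2) / ((n : ℝ) - 1))|
        ≤ C / ((n : ℝ) - 1) ^ 2) ∧
    Real.sqrt (s * t) - (s + t) / 2 < 0 ∧
    Tendsto
      (fun N : ℕ => ∏ n ∈ Finset.Icc 2 N,
        (Real.sqrt (s * t) + n - 1) / Real.sqrt ((s + n - 1) * (t + n - 1)))
      atTop (nhds 0) := by
  obtain ⟨C, hC0, hC⟩ := key_est s t hs ht
  -- the main pointwise estimate, in the exact form of the statement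
  have hmain : ∀ n : ℕ, 2 ≤ n →
      |(Real.sqrt (s * t) + n - 1) / Real.sqrt ((s + n - 1) * (t + n - 1))
          - (1 + (Real.sqrt (s * t) - (s + t) / 2) / ((n : ℝ) - 1))|
        ≤ C / ((n : ℝ) - 1) ^ 2 := by
    intro n hn
    have hn2 : (2:ℝ) ≤ (n : ℝ) := by exact_mod_cast hn
    have hm : (1:ℝ) ≤ (n:ℝ) - 1 := by linarith
    have := hC ((n:ℝ) - 1) hm
    rw [show s + (n:ℝ) - 1 = s + ((n:ℝ) - 1) from by ring,
        show t + (n:ℝ) - 1 = t + ((n:ℝ) - 1) from by ring,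
        show Real.sqrt (s*t) + (n:ℝ) - 1 = Real.sqrt (s*t) + ((n:ℝ) - 1) from by ring]
    exact this
  -- negativity of the constant
  have hu0 : 0 ≤ Real.sqrt (s*t) := Real.sqrt_nonneg _
  have hu2 : (Real.sqrt (s*t))^2 = s*t := Real.sq_sqrt (by positivity)
  have hne : s - t ≠ 0 := sub_ne_zero.mpr hst
  have hsq : 0 < (s - t)^2 := by positivity
  have hneg : Real.sqrt (s * t) - (s + t) / 2 < 0 := by nlinarith [hu2, hu0, hsq]
  refine ⟨⟨C, hmain⟩, hneg, ?_⟩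
  set c := Real.sqrt (s * t) - (s + t) / 2 with hc
  -- upper bound for the partial products
  have hub : ∀ N : ℕ,
      (∏ n ∈ Finset.Icc 2 N,
        (Real.sqrt (s * t) + n - 1) / Real.sqrt ((s + n - 1) * (t + n - 1)))
      ≤ Real.exp (c * (∑ n ∈ Icc 2 N, 1/((n:ℝ)-1)) + C * 2) := by
    intro N
    have step1 : (∏ n ∈ Finset.Icc 2 N,
        (Real.sqrt (s * t) + n - 1) / Real.sqrt ((s + n - 1) * (t + n - 1)))
        ≤ ∏ n ∈ Finset.Icc 2 N, Real.exp (c/((n:ℝ)-1) + C/((n:ℝ)-1)^2) := by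
      apply Finset.prod_le_prod
      · intro i hi
        have hi2 : 2 ≤ i := (Finset.mem_Icc.mp hi).1
        have : (2:ℝ) ≤ (i:ℝ) := by exact_mod_cast hi2
        apply div_nonneg _ (Real.sqrt_nonneg _)
        linarith [hu0]
      · intro i hi
        have hi2 : 2 ≤ i := (Finset.mem_Icc.mp hi).1
        have h1 := (abs_le.mp (hmain i hi2)).2
        have h2 := Real.add_one_le_exp (c/((i:ℝ)-1) + C/((i:ℝ)-1)^2)
        rw [hc] at h1 ⊢
        linarith
    have step2 : ∏ n ∈ Finset.Icc 2 N, Real.exp (c/((n:ℝ)-1) + C/((n:ℝ)-1)^2)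
        = Real.exp (∑ n ∈ Finset.Icc 2 N, (c/((n:ℝ)-1) + C/((n:ℝ)-1)^2)) :=
      (Real.exp_sum _ _).symm
    have step3 : ∑ n ∈ Finset.Icc 2 N, (c/((n:ℝ)-1) + C/((n:ℝ)-1)^2)
        ≤ c * (∑ n ∈ Icc 2 N, 1/((n:ℝ)-1)) + C * 2 := by
      have hsum : ∑ n ∈ Finset.Icc 2 N, (c/((n:ℝ)-1) + C/((n:ℝ)-1)^2)
          = c * (∑ n ∈ Icc 2 N, 1/((n:ℝ)-1)) + C * (∑ n ∈ Icc 2 N, 1/((n:ℝ)-1)^2) := by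
        rw [Finset.mul_sum, Finset.mul_sum, ← Finset.sum_add_distrib]
        refine Finset.sum_congr rfl fun i _ => ?_
        ring
      rw [hsum]
      have := sqsum_Icc_le N
      nlinarith [mul_le_mul_of_nonneg_left (sqsum_Icc_le N) hC0]
    calc (∏ n ∈ Finset.Icc 2 N,
        (Real.sqrt (s * t) + n - 1) / Real.sqrt ((s + n - 1) * (t + n - 1)))
        ≤ ∏ n ∈ Finset.Icc 2 N, Real.exp (c/((n:ℝ)-1) + C/((n:ℝ)-1)^2) := step1
      _ = Real.exp (∑ n ∈ Finset.Icc 2 N, (c/((n:ℝ)-1) + C/((n:ℝ)-1)^2)) := step2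
      _ ≤ Real.exp (c * (∑ n ∈ Icc 2 N, 1/((n:ℝ)-1)) + C * 2) := Real.exp_le_exp.mpr step3
  have hlb : ∀ N : ℕ, 0 ≤ (∏ n ∈ Finset.Icc 2 N,
        (Real.sqrt (s * t) + n - 1) / Real.sqrt ((s + n - 1) * (t + n - 1))) := by
    intro N
    apply Finset.prod_nonneg
    intro i hi
    have hi2 : 2 ≤ i := (Finset.mem_Icc.mp hi).1
    have : (2:ℝ) ≤ (i:ℝ) := by exact_mod_cast hi2
    apply div_nonneg _ (Real.sqrt_nonneg _)
    linarith [hu0]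
  have hconv : Tendsto (fun N : ℕ =>
      Real.exp (c * (∑ n ∈ Icc 2 N, 1/((n:ℝ)-1)) + C * 2)) atTop (nhds 0) := by
    apply Real.tendsto_exp_atBot.comp
    apply tendsto_atBot_add_const_right
    exact (tendsto_const_mul_atBot_of_neg hneg).mpr harm_tendsto
  exact tendsto_of_tendsto_of_tendsto_of_le_of_le tendsto_const_nhds hconv hlb hub
end

section
/- For each t > 0 and n ≥ 2, the Ewens measure μ_t^n on S(n) is the pushforward of the product measure μ̄_t^1 × ⋯ × μ̄_t^n on {0}×{0,1}×⋯×{0,…,n−1} under the coding bijection, because the number of cycles [x] of a permutation x equals the number of zero coordinates in its code (i_1,…,i_n). -/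
/-- The number of cycles of a permutation, counting fixed points as cycles. -/
def cycleCount {n : ℕ} (x : Equiv.Perm (Fin n)) : ℕ :=
  x.cycleType.card + (Finset.univ.filter fun i => x i = i).card

/-- The canonical projection `S(n+1) → S(n)`: remove the largest element from its cycle. -/
def proj {n : ℕ} (x : Equiv.Perm (Fin (n + 1))) : Equiv.Perm (Fin n) :=
  Equiv.removeNone (finSuccEquivLast.permCongr x)

/-- The code `(i_1,…,i_n)` of a permutation in `S(n)` (as a list, `i_k` at position `k-1`):
`i_k = 0` if the element `k` starts a new cycle in the partial permutation `p_k(x)`,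
and `i_k = j ∈ {1,…,k−1}` if `k` was inserted into a cycle right before `j`. -/
def code : (n : ℕ) → Equiv.Perm (Fin n) → List ℕ
  | 0, _ => []
  | n + 1, x =>
      code n (proj x) ++
        [if x (Fin.last n) = Fin.last n then 0 else (x (Fin.last n) : ℕ) + 1]

open Equiv Equiv.Perm Finset

section Aux

variable {β : Type*} [Fintype β] [DecidableEq β]

/-- Generic cycle count for permutations of a finite type. -/
def ccount (σ : Equiv.Perm β) : ℕ :=
  σ.cycleType.card + (Finset.univ.filter fun i => σ i = i).card

lemma ccount_eq (σ : Equiv.Perm β) :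
    ccount σ = Multiset.card σ.cycleType + (Fintype.card β - σ.support.card) := by
  unfold ccount
  congr 1
  have h : (Finset.univ.filter fun i => σ i = i) = σ.supportᶜ := by
    ext i; simp [Equiv.Perm.mem_support]
  rw [h, Finset.card_compl]

lemma ccount_swap_mul (g : Equiv.Perm β) (a : β) (ha : g a ≠ a) :
    ccount (Equiv.swap a (g a) * g) = ccount g + 1 := by
  classical
  set c := g.cycleOf a with hc
  have hmem : c ∈ g.cycleFactorsFinset :=
    (Equiv.Perm.cycleOf_mem_cycleFactorsFinset_iff).2 (Equiv.Perm.mem_support.2 ha)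
  have hcyc : c.IsCycle := Equiv.Perm.isCycle_cycleOf g ha
  have hca : c a = g a := Equiv.Perm.cycleOf_apply_self g a
  have hcaa : c a ≠ a := by rw [hca]; exact ha
  set h := g * c⁻¹ with hh
  have hdisj : Equiv.Perm.Disjoint h c :=
    Equiv.Perm.disjoint_mul_inv_of_mem_cycleFactorsFinset hmem
  have hg : g = c * h := by
    rw [hh, ← hdisj.commute.eq, inv_mul_cancel_right]
  have hcount : Multiset.card g.cycleType = Multiset.card h.cycleType + 1 := by
    rw [hg, hdisj.symm.cycleType_mul, hcyc.cycleType]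
    simp [add_comm]
  have hsupp : g.support.card = c.support.card + h.support.card := by
    rw [hg, hdisj.symm.card_support_mul]
  have hS2 : 2 ≤ c.support.card := hcyc.two_le_card_support
  have hgN : g.support.card ≤ Fintype.card β := Finset.card_le_univ _
  have hswap : Equiv.swap a (g a) * g = (Equiv.swap a (c a) * c) * h := by
    rw [hca, mul_assoc, ← hg]
  by_cases hffx : c (c a) = a
  · -- the cycle of `a` is a transposition
    have hceq : c = Equiv.swap a (c a) :=
      hcyc.eq_swap_of_apply_apply_eq_self hcaa hffx
    have hS : c.support.card = 2 := by
      rw [hceq]; exact Equiv.Perm.card_support_swap (Ne.symm hcaa)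
    have h1 : Equiv.swap a (c a) * c = 1 := by
      have h2 := congrArg (fun p => Equiv.swap a (c a) * p) hceq
      simpa [Equiv.swap_mul_self] using h2
    rw [hswap, h1, one_mul, ccount_eq, ccount_eq]
    have hhN : h.support.card ≤ Fintype.card β := Finset.card_le_univ _
    omega
  · -- the cycle of `a` has length at least 3; removing `a` keeps a cycle
    set d := Equiv.swap a (c a) * c with hd
    have hdcyc : d.IsCycle := hcyc.swap_mul hcaa hffx
    have hdsupp : d.support = c.support \ {a} :=
      Equiv.Perm.support_swap_mul_eq c a hffx
    have hamem : a ∈ c.support := Equiv.Perm.mem_support.2 hcaa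
    have hdcard : d.support.card = c.support.card - 1 := by
      rw [hdsupp, Finset.card_sdiff_of_subset (by simpa using hamem)]
      simp
    have hha : h a = a := by
      rcases hdisj a with h' | h'
      · exact h'
      · exact absurd h' hcaa
    have hhca : h (c a) = c a := by
      rcases hdisj (c a) with h' | h'
      · exact h'
      · exact absurd h' (fun hq => hcaa (c.injective (by rw [hq, hca])))
    have hdh : Equiv.Perm.Disjoint d h := by
      intro x
      by_cases hx : h x = x
      · exact Or.inr hx
      · refine Or.inl ?_
        have hcx : c x = x := by
          rcases hdisj x with h' | h'
          · exact absurd h' hx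
          · exact h'
        have hxa : x ≠ a := fun hq => hx (hq ▸ hha)
        have hxca : x ≠ c a := fun hq => hx (hq ▸ hhca)
        rw [hd, Equiv.Perm.mul_apply, hcx,
          Equiv.swap_apply_of_ne_of_ne hxa hxca]
    have hdt : Multiset.card (d * h).cycleType
        = Multiset.card h.cycleType + 1 := by
      rw [hdh.cycleType_mul, hdcyc.cycleType]
      simp [add_comm]
    have hds : (d * h).support.card = d.support.card + h.support.card :=
      hdh.card_support_mul
    rw [hswap, ccount_eq, ccount_eq]
    have hdhN : (d * h).support.card ≤ Fintype.card β := Finset.card_le_univ _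
    omega

set_option maxHeartbeats 1000000 in
lemma ccount_optionCongr (τ : Equiv.Perm β) :
    ccount τ.optionCongr = ccount τ + 1 := by
  classical
  let f : β ≃ {x : Option β // x.isSome} := (Equiv.optionIsSomeEquiv β).symm
  have hext : τ.optionCongr = τ.extendDomain f := by
    refine Equiv.ext fun o => ?_
    cases o with
    | none =>
        rw [Equiv.Perm.extendDomain_apply_not_subtype _ _ (by simp)]
        simp
    | some a =>
        have h2 : (τ.extendDomain f) (some a) = ((f (τ (f.symm ⟨some a, rfl⟩))) : Option β) :=
          Equiv.Perm.extendDomain_apply_subtype τ f (b := some a) rfl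
        rw [h2]
        simp [f, Equiv.optionIsSomeEquiv]
  rw [hext, ccount_eq, ccount_eq, Equiv.Perm.cycleType_extendDomain,
    Equiv.Perm.card_support_extend_domain, Fintype.card_option]
  have := Finset.card_le_univ τ.support
  omega

end Aux

lemma cycleCount_eq_ccount {n : ℕ} (x : Equiv.Perm (Fin n)) :
    cycleCount x = ccount x := rfl

lemma ccount_permCongr {n : ℕ} (x : Equiv.Perm (Fin (n + 1))) :
    ccount (finSuccEquivLast.permCongr x) = ccount x := by
  classical
  let f : Fin (n + 1) ≃ {o : Option (Fin n) // True} :=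
    finSuccEquivLast.trans (Equiv.subtypeUnivEquiv fun _ => trivial).symm
  have hext : finSuccEquivLast.permCongr x = x.extendDomain f := by
    refine Equiv.ext fun o => ?_
    rw [Equiv.Perm.extendDomain_apply_subtype _ _ trivial]
    simp [f, Equiv.subtypeUnivEquiv]
  rw [hext, ccount_eq, ccount_eq, Equiv.Perm.cycleType_extendDomain,
    Equiv.Perm.card_support_extend_domain, Fintype.card_option]
  simp

lemma cycleCount_step {n : ℕ} (x : Equiv.Perm (Fin (n + 1))) :
    cycleCount x
      = cycleCount (proj x) + (if x (Fin.last n) = Fin.last n then 1 else 0) := by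
  classical
  set σ := finSuccEquivLast.permCongr x with hσ
  have hcc : cycleCount x = ccount σ := by
    rw [cycleCount_eq_ccount, ← ccount_permCongr x]
  have hkey : (Equiv.removeNone σ).optionCongr = Equiv.swap none (σ none) * σ :=
    map_equiv_removeNone σ
  have hproj : proj x = Equiv.removeNone σ := rfl
  have hσnone : σ none = finSuccEquivLast (x (Fin.last n)) := by
    simp [hσ, Equiv.permCongr_apply]
  by_cases hfix : x (Fin.last n) = Fin.last n
  · have h0 : σ none = none := by
      rw [hσnone, hfix, finSuccEquivLast_last]
    have heq : (Equiv.removeNone σ).optionCongr = σ := by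
      rw [hkey, h0, Equiv.swap_self]
      simp [Equiv.Perm.one_def]
    have h1 := ccount_optionCongr (Equiv.removeNone σ)
    rw [heq] at h1
    rw [hcc, h1, if_pos hfix, cycleCount_eq_ccount, hproj]
  · have h0 : σ none ≠ none := by
      rw [hσnone]
      intro hq
      apply hfix
      have h2 := congrArg finSuccEquivLast.symm hq
      simpa using h2
    have h1 := ccount_swap_mul σ none h0
    rw [← hkey, ccount_optionCongr] at h1
    rw [hcc, if_neg hfix, cycleCount_eq_ccount, hproj]
    omega

lemma cycleCount_eq_count_code (n : ℕ) (x : Equiv.Perm (Fin n)) :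
    cycleCount x = (code n x).count 0 := by
  induction n with
  | zero =>
      have hx : x = 1 := by
        ext i; exact absurd i.2 (by omega)
      simp [code, cycleCount, hx]
  | succ n ih =>
      rw [code, List.count_append, cycleCount_step x, ih (proj x)]
      by_cases hfix : x (Fin.last n) = Fin.last n <;> simp [hfix]

lemma code_length (n : ℕ) (x : Equiv.Perm (Fin n)) : (code n x).length = n := by
  induction n with
  | zero => rfl
  | succ n ih => rw [code, List.length_append, ih (proj x)]; simp

lemma count_zero_eq_card_filter (l : List ℕ) :
    l.count 0 = ((Finset.range l.length).filter fun k => l.getD k 0 = 0).card := by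
  induction l with
  | nil => simp
  | cons a l ih =>
      rw [Finset.card_filter] at *
      rw [List.count_cons, List.length_cons, Finset.sum_range_succ']
      simp only [List.getD_cons_succ, List.getD_cons_zero]
      rw [← ih]
      by_cases ha : a = 0 <;> simp [ha, add_comm]

/-- The number of cycles `[x]` equals the number of zero coordinates in the code of `x`;
consequently the Ewens weight `t^{[x]}/(t(t+1)⋯(t+n−1))` of `x` equals the product of the
weights `μ̄_t^k(i_k)` of its code entries, i.e. the Ewens measure `μ_t^n` is the pushforward
of the product measure `μ̄_t^1 × ⋯ × μ̄_t^n` under the coding bijection. -/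
theorem stmt6 (n : ℕ) (hn : 2 ≤ n) (t : ℝ) (ht : 0 < t) (x : Equiv.Perm (Fin n)) :
    cycleCount x = (code n x).count 0 ∧
    t ^ cycleCount x / ∏ i ∈ Finset.range n, (t + i)
      = ∏ k ∈ Finset.range n,
          (if (code n x).getD k 0 = 0 then t / (t + k) else 1 / (t + k)) := by
  refine ⟨cycleCount_eq_count_code n x, ?_⟩
  have hfac : ∀ k : ℕ,
      (if (code n x).getD k 0 = 0 then t / (t + k) else 1 / (t + k))
        = (if (code n x).getD k 0 = 0 then t else 1) / (t + k) := by
    intro k; split <;> rfl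
  calc t ^ cycleCount x / ∏ i ∈ Finset.range n, (t + i)
      = (∏ k ∈ Finset.range n,
          (if (code n x).getD k 0 = 0 then t else 1)) / ∏ i ∈ Finset.range n, (t + i) := by
        rw [Finset.prod_ite, Finset.prod_const, Finset.prod_const_one, mul_one,
          cycleCount_eq_count_code n x, count_zero_eq_card_filter, code_length]
    _ = ∏ k ∈ Finset.range n,
          (if (code n x).getD k 0 = 0 then t / (t + k) else 1 / (t + k)) := by
        rw [← Finset.prod_div_distrib]
        exact Finset.prod_congr rfl fun k _ => (hfac k).symm
end

section
/- The canonical projection p: S(n+1) → S(n), which removes the element n+1 from its cycle, is equivariant for the two-sided action of S(n): p(g₂⁻¹ x g₁) = g₂⁻¹ p(x) g₁ for all g₁, g₂ ∈ S(n) and x ∈ S(n+1). Moreover, for n ≥ 4 it is the unique map S(n+1) → S(n) with this equivariance property. -/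
/-- The embedding `S(n) ⊂ S(n+1)` as the permutations fixing the last element. -/
def emb {n : ℕ} (g : Equiv.Perm (Fin n)) : Equiv.Perm (Fin (n + 1)) :=
  finSuccEquivLast.symm.permCongr g.optionCongr

open Equiv

lemma emb_castSucc {n : ℕ} (g : Perm (Fin n)) (i : Fin n) :
    emb g i.castSucc = (g i).castSucc := by
  simp [emb, finSuccEquivLast_castSucc]

lemma emb_last {n : ℕ} (g : Perm (Fin n)) :
    emb g (Fin.last n) = Fin.last n := by
  simp [emb, finSuccEquivLast_last]

lemma proj_castSucc_of_ne {n : ℕ} (x : Perm (Fin (n + 1))) (i : Fin n)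
    (h : x i.castSucc ≠ Fin.last n) : (proj x i).castSucc = x i.castSucc := by
  obtain ⟨j, hj⟩ := Fin.exists_castSucc_eq.mpr h
  have key : (finSuccEquivLast.permCongr x) (some i) = some j := by
    simp [permCongr_apply, ← hj, finSuccEquivLast_castSucc]
  have := Equiv.removeNone_some (finSuccEquivLast.permCongr x) ⟨j, key⟩
  rw [key] at this
  simp only [proj]
  rw [Option.some_inj.mp this, hj]

lemma proj_castSucc_of_eq {n : ℕ} (x : Perm (Fin (n + 1))) (i : Fin n)
    (h : x i.castSucc = Fin.last n) : (proj x i).castSucc = x (Fin.last n) := by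
  have hxl : x (Fin.last n) ≠ Fin.last n := by
    intro hc
    exact (Fin.castSucc_lt_last i).ne (x.injective (h.trans hc.symm))
  obtain ⟨j, hj⟩ := Fin.exists_castSucc_eq.mpr hxl
  have key : (finSuccEquivLast.permCongr x) (some i) = none := by
    simp [permCongr_apply, h, finSuccEquivLast_last]
  have := Equiv.removeNone_none (finSuccEquivLast.permCongr x) key
  have key2 : (finSuccEquivLast.permCongr x) none = some j := by
    simp [permCongr_apply, ← hj, finSuccEquivLast_castSucc]
  rw [key2] at this
  simp only [proj]
  rw [Option.some_inj.mp this, hj]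

lemma proj_equivar {n : ℕ} (g₁ g₂ : Perm (Fin n)) (x : Perm (Fin (n + 1))) :
    proj (emb g₂⁻¹ * x * emb g₁) = g₂⁻¹ * proj x * g₁ := by
  set y := emb g₂⁻¹ * x * emb g₁ with hy
  apply Equiv.ext; intro i
  apply Fin.castSucc_injective n
  have hyi : y i.castSucc = emb g₂⁻¹ (x ((g₁ i).castSucc)) := by
    simp [hy, Perm.mul_apply, emb_castSucc]
  by_cases h : x ((g₁ i).castSucc) = Fin.last n
  · have hyl : y i.castSucc = Fin.last n := by rw [hyi, h, emb_last]
    have h1 := proj_castSucc_of_eq y i hyl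
    have hxl : x (Fin.last n) ≠ Fin.last n := by
      intro hc
      exact (Fin.castSucc_lt_last (g₁ i)).ne (x.injective (h.trans hc.symm))
    obtain ⟨j, hj⟩ := Fin.exists_castSucc_eq.mpr hxl
    have h2 : y (Fin.last n) = (g₂⁻¹ j).castSucc := by
      simp [hy, Perm.mul_apply, emb_last, ← hj, emb_castSucc]
    have h3 := proj_castSucc_of_eq x (g₁ i) h
    have h4 : proj x (g₁ i) = j := by
      apply Fin.castSucc_injective; rw [h3, ← hj]
    rw [h1, h2]
    simp [Perm.mul_apply, h4]
  · obtain ⟨j, hj⟩ := Fin.exists_castSucc_eq.mpr h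
    have hyi2 : y i.castSucc = (g₂⁻¹ j).castSucc := by
      rw [hyi, ← hj, emb_castSucc]
    have h1 := proj_castSucc_of_ne y i (by rw [hyi2]; exact (Fin.castSucc_lt_last _).ne)
    have h3 := proj_castSucc_of_ne x (g₁ i) h
    have h4 : proj x (g₁ i) = j := by
      apply Fin.castSucc_injective; rw [h3, ← hj]
    rw [h1, hyi2]
    simp [Perm.mul_apply, h4]

lemma proj_emb {n : ℕ} (g : Perm (Fin n)) : proj (emb g) = g := by
  apply Equiv.ext; intro i
  apply Fin.castSucc_injective n
  rw [proj_castSucc_of_ne _ _ (by rw [emb_castSucc]; exact (Fin.castSucc_lt_last _).ne),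
    emb_castSucc]

lemma emb_proj_of_fix {n : ℕ} (x : Perm (Fin (n + 1))) (h : x (Fin.last n) = Fin.last n) :
    emb (proj x) = x := by
  apply Equiv.ext; intro j
  induction j using Fin.lastCases with
  | last => rw [emb_last, h]
  | cast i =>
    rw [emb_castSucc]
    apply proj_castSucc_of_ne
    intro hc
    exact (Fin.castSucc_lt_last i).ne (x.injective (hc.trans h.symm))

lemma emb_mul {n : ℕ} (a b : Perm (Fin n)) : emb (a * b) = emb a * emb b := by
  apply Equiv.ext; intro j
  induction j using Fin.lastCases with
  | last => simp [Perm.mul_apply, emb_last]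
  | cast i => simp [Perm.mul_apply, emb_castSucc]

lemma emb_one {n : ℕ} : emb (1 : Perm (Fin n)) = 1 := by
  apply Equiv.ext; intro j
  induction j using Fin.lastCases with
  | last => simp [emb_last]
  | cast i => simp [emb_castSucc]

lemma emb_inv {n : ℕ} (g : Perm (Fin n)) : emb g⁻¹ = (emb g)⁻¹ := by
  apply eq_inv_of_mul_eq_one_left
  rw [← emb_mul, inv_mul_cancel, emb_one]

lemma exists_ne3 {n : ℕ} (hn : 4 ≤ n) (a b c : Fin n) :
    ∃ k : Fin n, k ≠ a ∧ k ≠ b ∧ k ≠ c := by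
  by_contra hcon
  push_neg at hcon
  have hsub : (Finset.univ : Finset (Fin n)) ⊆ {a, b, c} := by
    intro k _
    simp only [Finset.mem_insert, Finset.mem_singleton]
    by_cases h1 : k = a
    · exact Or.inl h1
    by_cases h2 : k = b
    · exact Or.inr (Or.inl h2)
    exact Or.inr (Or.inr (hcon k h1 h2))
  have h1 := Finset.card_le_card hsub
  have h2 : ({a, b, c} : Finset (Fin n)).card ≤ 3 := by
    apply le_trans (Finset.card_insert_le _ _)
    have := Finset.card_insert_le b ({c} : Finset (Fin n))
    simp at this ⊢
    omega
  simp [Finset.card_univ] at h1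
  omega

lemma cent {n : ℕ} (hn : 4 ≤ n) (z : Fin n) (σ : Perm (Fin n))
    (h : ∀ g : Perm (Fin n), g z = z → g * σ = σ * g) : σ = 1 := by
  have hz : σ z = z := by
    by_contra hne
    obtain ⟨k, hka, hkb, -⟩ := exists_ne3 hn (σ z) z z
    have hgz : (Equiv.swap (σ z) k) z = z :=
      Equiv.swap_apply_of_ne_of_ne (fun hc => hne hc.symm) (fun hc => hkb hc.symm)
    have h2 := congrArg (fun p : Perm (Fin n) => p z) (h _ hgz)
    simp only [Perm.mul_apply, hgz, Equiv.swap_apply_left] at h2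
    exact hka h2
  apply Equiv.ext; intro i
  simp only [Perm.one_apply]
  by_cases hiz : i = z
  · rw [hiz, hz]
  by_cases hji : σ i = i
  · exact hji
  have hjz : σ i ≠ z := fun hc => hiz (σ.injective (hc.trans hz.symm))
  obtain ⟨k, hk1, hk2, hk3⟩ := exists_ne3 hn z i (σ i)
  have hgz : (Equiv.swap i k) z = z :=
    Equiv.swap_apply_of_ne_of_ne (fun hc => hiz hc.symm) (fun hc => hk1 hc.symm)
  have h2 := congrArg (fun p : Perm (Fin n) => p i) (h _ hgz)
  simp only [Perm.mul_apply, Equiv.swap_apply_left] at h2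
  rw [Equiv.swap_apply_of_ne_of_ne hji (fun hc => hk3 hc.symm)] at h2
  exact (hk2 (σ.injective h2).symm).elim

/-- The canonical projection `p : S(n+1) → S(n)` is equivariant for the two-sided
action of `S(n)`: `p(g₂⁻¹ x g₁) = g₂⁻¹ p(x) g₁`; and for `n ≥ 4` it is the unique
map `S(n+1) → S(n)` with this property. -/
theorem stmt7 (n : ℕ) :
    (∀ (g₁ g₂ : Equiv.Perm (Fin n)) (x : Equiv.Perm (Fin (n + 1))),
      proj (emb g₂⁻¹ * x * emb g₁) = g₂⁻¹ * proj x * g₁) ∧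
    (4 ≤ n → ∀ q : Equiv.Perm (Fin (n + 1)) → Equiv.Perm (Fin n),
      (∀ (g₁ g₂ : Equiv.Perm (Fin n)) (x : Equiv.Perm (Fin (n + 1))),
        q (emb g₂⁻¹ * x * emb g₁) = g₂⁻¹ * q x * g₁) → q = proj) := by
  refine ⟨proj_equivar, ?_⟩
  intro hn q hq
  -- q 1 = 1
  have hone : q 1 = 1 := by
    apply cent hn ⟨0, by omega⟩
    intro g _
    have := hq g g 1
    rw [mul_one, ← emb_mul, inv_mul_cancel, emb_one] at this
    conv_lhs => rw [this]
    group
  set z : Fin n := ⟨0, by omega⟩ with hzdef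
  set t : Perm (Fin (n + 1)) := Equiv.swap (Fin.last n) z.castSucc with htdef
  -- conjugation of t by emb g for g fixing z
  have hconj : ∀ g : Perm (Fin n), g z = z → emb g⁻¹ * t * emb g = t := by
    intro g hg
    have h1 : emb g = (emb g⁻¹)⁻¹ := by rw [emb_inv, inv_inv]
    rw [h1, htdef, ← Equiv.swap_apply_apply, emb_last, emb_castSucc]
    have hgz : g⁻¹ z = z := by
      conv_lhs => rw [← hg]
      exact g.symm_apply_apply z
    rw [hgz]
  have hqt : q t = 1 := by
    apply cent hn z
    intro g hg
    have := hq g g t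
    rw [hconj g hg] at this
    conv_lhs => rw [this]
    group
  have hpt : proj t = 1 := by
    apply Equiv.ext; intro i
    apply Fin.castSucc_injective n
    simp only [Perm.one_apply]
    by_cases hiz : i = z
    · have h1 : t i.castSucc = Fin.last n := by
        rw [hiz, htdef, Equiv.swap_apply_right]
      rw [proj_castSucc_of_eq t i h1, htdef, Equiv.swap_apply_left, hiz]
    · have h1 : t i.castSucc = i.castSucc := by
        rw [htdef]
        exact Equiv.swap_apply_of_ne_of_ne (Fin.castSucc_lt_last i).ne
          (fun hc => hiz (Fin.castSucc_injective n hc))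
      rw [proj_castSucc_of_ne t i (by rw [h1]; exact (Fin.castSucc_lt_last i).ne), h1]
  funext x
  by_cases hx : x (Fin.last n) = Fin.last n
  · have hxe : emb (proj x) = x := emb_proj_of_fix x hx
    have := hq (proj x) 1 1
    simp only [inv_one, emb_one, one_mul, mul_one, hxe, hone] at this
    exact this
  · obtain ⟨a', ha⟩ := Fin.exists_castSucc_eq.mpr hx
    set s : Perm (Fin n) := Equiv.swap a' z with hsdef
    set t' : Perm (Fin (n + 1)) := Equiv.swap (Fin.last n) (x (Fin.last n)) with ht'def
    have hsinv : (emb s)⁻¹ = emb s := by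
      rw [← emb_inv, hsdef, Equiv.swap_inv]
    have ht' : emb s * t * (emb s)⁻¹ = t' := by
      rw [htdef, ← Equiv.swap_apply_apply, emb_last, emb_castSucc, hsdef,
        Equiv.swap_apply_right, ha]
    have ht2 : emb s * t * emb s = t' := by
      rw [← ht', hsinv]
    have hfix : (t' * x) (Fin.last n) = Fin.last n := by
      rw [Perm.mul_apply, ht'def, Equiv.swap_apply_right]
    set g : Perm (Fin n) := proj (t' * x) with hgdef
    have hembg : emb g = t' * x := emb_proj_of_fix _ hfix
    have ht'2 : t' * t' = 1 := by rw [ht'def]; exact Equiv.swap_mul_self _ _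
    have hxg : x = emb s⁻¹⁻¹ * t * emb (s * g) := by
      rw [inv_inv, emb_mul, ← mul_assoc, ht2, hembg, ← mul_assoc, ht'2, one_mul]
    have e1 := hq (s * g) s⁻¹ t
    have e2 := proj_equivar (s * g) s⁻¹ t
    rw [← hxg] at e1 e2
    rw [e1, e2, hqt, hpt]
end

section
/- For x ∈ S(n+1) with image y = p(x) ∈ S(n) under the canonical projection, the number of cycles satisfies [x] = [y] + 1 if x fixes n+1 (equivalently x ∈ S(n) ⊂ S(n+1)), and [x] = [y] otherwise. -/
open Equiv Equiv.Perm Finset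

variable {β : Type*} [DecidableEq β] [Fintype β]

-- support of a cycle with a fixed point inserted
lemma support_swap_mul_cycle (c : Perm β) {a b : β} (hab : a ≠ b)
    (ha : c a = a) (hb : c b ≠ b) :
    (Equiv.swap a b * c).support = insert a c.support := by
  ext y
  simp only [Finset.mem_insert, Equiv.Perm.mem_support, Equiv.Perm.mul_apply]
  by_cases hya : y = a
  · subst hya
    simp [ha, Equiv.swap_apply_left, hab, hab.symm]
  · have hcy_ne_a : c y ≠ a := fun h => hya (c.injective (h.trans ha.symm))
    by_cases hcy : c y = b
    · have hyb : y ≠ b := fun h => hb (h ▸ hcy)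
      rw [hcy, Equiv.swap_apply_right]
      constructor
      · intro _; right; exact Ne.symm hyb
      · intro _; exact Ne.symm hya
    · rw [Equiv.swap_apply_of_ne_of_ne hcy_ne_a hcy]
      tauto

lemma sameCycle_swap_mul_pow (c : Perm β) {a b : β} (hab : a ≠ b) (ha : c a = a) :
    ∀ i : ℕ, (Equiv.swap a b * c).SameCycle b ((c ^ i) b) := by
  have hfix : ∀ j : ℕ, (c ^ j) a = a := by
    intro j
    induction j with
    | zero => rfl
    | succ k ih => rw [pow_succ, Equiv.Perm.mul_apply, ha, ih]
  have hpow : ∀ j : ℕ, (c ^ j) b ≠ a := fun j h =>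
    hab ((c ^ j).injective (h.trans (hfix j).symm)).symm
  intro i
  induction i with
  | zero => exact Equiv.Perm.SameCycle.refl _ _
  | succ i ih =>
    by_cases h : (c ^ (i + 1)) b = b
    · rw [h]
    · refine ih.trans ⟨1, ?_⟩
      have : (c ^ (i + 1)) b = c ((c ^ i) b) := by
        rw [pow_succ', Equiv.Perm.mul_apply]
      simp only [zpow_one, Equiv.Perm.mul_apply]
      rw [← this, Equiv.swap_apply_of_ne_of_ne (hpow (i + 1)) h]

lemma isCycle_swap_mul_cycle {c : Perm β} {a b : β} (hc : c.IsCycle) (hab : a ≠ b)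
    (ha : c a = a) (hb : c b ≠ b) : (Equiv.swap a b * c).IsCycle := by
  have hca : c b ≠ a := fun h => hab (c.injective (h.trans ha.symm)).symm
  have hsupp := support_swap_mul_cycle c hab ha hb
  refine ⟨b, ?_, ?_⟩
  · rw [Equiv.Perm.mul_apply, Equiv.swap_apply_of_ne_of_ne hca hb]
    exact hb
  · intro y hy
    have hy' : y ∈ (Equiv.swap a b * c).support := Equiv.Perm.mem_support.mpr hy
    rw [hsupp, Finset.mem_insert] at hy'
    rcases hy' with rfl | hy'
    · refine Equiv.Perm.SameCycle.symm ⟨1, ?_⟩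
      simp [Equiv.Perm.mul_apply, ha, Equiv.swap_apply_left]
    · obtain ⟨i, hi⟩ := hc.exists_pow_eq hb (Equiv.Perm.mem_support.mp hy')
      rw [← hi]
      exact sameCycle_swap_mul_pow c hab ha i

lemma key_insert (g : Perm β) {a b : β} (hab : a ≠ b) (hga : g a = a) (hgb : g b ≠ b) :
    (Equiv.swap a b * g).cycleType.card = g.cycleType.card ∧
    (Equiv.swap a b * g).support.card = g.support.card + 1 := by
  classical
  set c := g.cycleOf b with hc
  have hcmem : c ∈ g.cycleFactorsFinset :=
    Equiv.Perm.cycleOf_mem_cycleFactorsFinset_iff.mpr (Equiv.Perm.mem_support.mpr hgb)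
  have hccyc : c.IsCycle := Equiv.Perm.isCycle_cycleOf g hgb
  have hcsupp : c.support ⊆ g.support := Equiv.Perm.mem_cycleFactorsFinset_support_le hcmem
  have hcb : c b ≠ b := by
    rw [hc, Equiv.Perm.cycleOf_apply_self]; exact hgb
  have hca : c a = a := by
    by_contra h
    exact (Equiv.Perm.notMem_support.mpr hga) (hcsupp (Equiv.Perm.mem_support.mpr h))
  set g' := g * c⁻¹ with hg'
  have hdisj : Equiv.Perm.Disjoint g' c :=
    Equiv.Perm.disjoint_mul_inv_of_mem_cycleFactorsFinset hcmem
  have hgcg' : c * g' = g := by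
    rw [← hdisj.commute.eq, hg', inv_mul_cancel_right]
  have hcinva : c⁻¹ a = a := by
    conv_lhs => rw [← hca]
    exact Equiv.symm_apply_apply c a
  have hg'a : g' a = a := by
    rw [hg', Equiv.Perm.mul_apply, hcinva, hga]
  set d := Equiv.swap a b * c with hd
  have hdcyc : d.IsCycle := isCycle_swap_mul_cycle hccyc hab hca hcb
  have hdsupp : d.support = insert a c.support := support_swap_mul_cycle c hab hca hcb
  have hdd : Equiv.Perm.Disjoint d g' := by
    intro x
    rcases hdisj x with hx | hx
    · exact Or.inr hx
    · by_cases hxa : x = a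
      · exact Or.inr (hxa ▸ hg'a)
      · have hxb : x ≠ b := fun h => hcb (h ▸ hx)
        left
        rw [hd, Equiv.Perm.mul_apply, hx, Equiv.swap_apply_of_ne_of_ne hxa hxb]
  have heq : Equiv.swap a b * g = d * g' := by
    rw [hd, mul_assoc, hgcg']
  have hanotc : a ∉ c.support := Equiv.Perm.notMem_support.mpr hca
  have hcardct : (Equiv.swap a b * g).cycleType.card = g.cycleType.card := by
    rw [heq, hdd.cycleType_mul, hdcyc.cycleType]
    have hsub : (g * c⁻¹).cycleType = g.cycleType - c.cycleType :=
      Equiv.Perm.cycleType_mul_inv_mem_cycleFactorsFinset_eq_sub hcmem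
    rw [← hg'] at hsub
    rw [hsub, Multiset.card_add,
      Multiset.card_sub (Equiv.Perm.cycleType_le_of_mem_cycleFactorsFinset hcmem)]
    have h1 : Multiset.card c.cycleType = 1 := Equiv.Perm.card_cycleType_eq_one.mpr hccyc
    have h2 : 1 ≤ Multiset.card g.cycleType := by
      rw [Nat.one_le_iff_ne_zero]
      intro h
      have := Equiv.Perm.card_cycleType_eq_zero.mp h
      rw [this] at hgb
      exact hgb rfl
    simp only [Multiset.card_singleton]
    omega
  have hcardsupp : (Equiv.swap a b * g).support.card = g.support.card + 1 := by
    have hgsupp : g.support = c.support ∪ g'.support := by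
      rw [← hgcg', (hdisj.symm).support_mul]
    rw [heq, hdd.support_mul, hdsupp]
    have hds : _root_.Disjoint c.support g'.support := hdisj.symm.disjoint_support
    have hag' : a ∉ g'.support := Equiv.Perm.notMem_support.mpr hg'a
    rw [Finset.insert_union, Finset.card_insert_of_notMem (by
      simp only [Finset.mem_union, not_or]; exact ⟨hanotc, hag'⟩),
      Finset.card_union_of_disjoint hds, hgsupp, Finset.card_union_of_disjoint hds]
  exact ⟨hcardct, hcardsupp⟩

section OptionLemmas

variable {α : Type*} [DecidableEq α] [Fintype α]

lemma optionCongr_eq_extendDomain (τ : Perm α) :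
    (τ.optionCongr : Perm (Option α)) = τ.extendDomain (Equiv.optionIsSomeEquiv α).symm := by
  refine Equiv.Perm.ext fun o => ?_
  cases o with
  | none =>
    have h : (τ.extendDomain (Equiv.optionIsSomeEquiv α).symm) none = none :=
      Equiv.Perm.extendDomain_apply_not_subtype τ (Equiv.optionIsSomeEquiv α).symm (by simp)
    simp [h]
  | some a =>
    have h : (τ.extendDomain (Equiv.optionIsSomeEquiv α).symm) (some a) = some (τ a) := by
      rw [Equiv.Perm.extendDomain_apply_subtype τ (Equiv.optionIsSomeEquiv α).symm
        (b := some a) rfl]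
      rfl
    simp [h]

lemma cycleType_optionCongr (τ : Perm α) :
    Equiv.Perm.cycleType (τ.optionCongr : Perm (Option α)) = τ.cycleType := by
  rw [optionCongr_eq_extendDomain, Equiv.Perm.cycleType_extendDomain]

lemma card_support_optionCongr (τ : Perm α) :
    (Equiv.Perm.support (τ.optionCongr : Perm (Option α))).card = τ.support.card := by
  rw [optionCongr_eq_extendDomain, Equiv.Perm.card_support_extend_domain]

end OptionLemmas

section Main

variable {α : Type*} [DecidableEq α] [Fintype α]

lemma caseA (σ : Perm (Option α)) (h : σ none = none) :
    Multiset.card σ.cycleType =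
      Multiset.card (Equiv.Perm.cycleType (Equiv.removeNone σ : Perm α)) ∧
    σ.support.card = (Equiv.Perm.support (Equiv.removeNone σ : Perm α)).card := by
  have hσ := map_equiv_removeNone σ
  rw [h, Equiv.swap_self] at hσ
  have hσ' : ((Equiv.removeNone σ).optionCongr : Perm (Option α)) = σ := by
    rw [hσ]; rfl
  constructor
  · conv_lhs => rw [← hσ']
    rw [cycleType_optionCongr]
  · conv_lhs => rw [← hσ']
    rw [card_support_optionCongr]

lemma caseB (σ : Perm (Option α)) (h : σ none ≠ none) :
    Multiset.card σ.cycleType + (Equiv.Perm.support (Equiv.removeNone σ : Perm α)).card + 1 =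
    Multiset.card (Equiv.Perm.cycleType (Equiv.removeNone σ : Perm α)) + σ.support.card := by
  obtain ⟨b', hb'⟩ := Option.ne_none_iff_exists'.mp h
  set τ : Perm α := Equiv.removeNone σ with hτ
  set g := (τ.optionCongr : Perm (Option α)) with hg
  have hgnone : g none = none := by simp [hg]
  have hσ : σ = Equiv.swap none (some b') * g := by
    have := map_equiv_removeNone σ
    rw [← hτ, ← hg, hb'] at this
    rw [this, ← mul_assoc, Equiv.swap_mul_self, one_mul]
  have hne : (none : Option α) ≠ some b' := by simp
  have hctg : Multiset.card (Equiv.Perm.cycleType g) = Multiset.card τ.cycleType := by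
    rw [hg, cycleType_optionCongr]
  have hsg : (Equiv.Perm.support g).card = τ.support.card := by
    rw [hg, card_support_optionCongr]
  by_cases hgb : g (some b') = some b'
  · have hdisj : Equiv.Perm.Disjoint (Equiv.swap none (some b')) g := by
      intro o
      by_cases h1 : o = none
      · exact Or.inr (h1 ▸ hgnone)
      · by_cases h2 : o = some b'
        · exact Or.inr (h2 ▸ hgb)
        · exact Or.inl (Equiv.swap_apply_of_ne_of_ne h1 h2)
    have hct : Multiset.card σ.cycleType = 1 + Multiset.card τ.cycleType := by
      rw [hσ, hdisj.cycleType_mul, Multiset.card_add,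
        Equiv.Perm.card_cycleType_eq_one.mpr (Equiv.Perm.isCycle_swap hne), hctg]
    have hs : σ.support.card = 2 + τ.support.card := by
      rw [hσ, hdisj.support_mul,
        Finset.card_union_of_disjoint hdisj.disjoint_support,
        Equiv.Perm.card_support_swap hne, hsg]
    omega
  · obtain ⟨hct, hs⟩ := key_insert g hne hgnone hgb
    rw [← hσ] at hct hs
    omega

lemma fix_add_support (m : ℕ) (x : Perm (Fin m)) :
    (Finset.univ.filter fun i => x i = i).card + x.support.card = m := by
  have := Finset.card_filter_add_card_filter_not
    (s := (Finset.univ : Finset (Fin m))) (p := fun i => x i = i)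
  simpa [Equiv.Perm.support] using this

lemma permCongr_eq_extendDomain (n : ℕ) (x : Perm (Fin (n + 1))) :
    (finSuccEquivLast.permCongr x : Perm (Option (Fin n))) =
      x.extendDomain (finSuccEquivLast.trans
        (Equiv.subtypeUnivEquiv (fun _ : Option (Fin n) => trivial)).symm) := by
  refine Equiv.Perm.ext fun o => ?_
  rw [Equiv.Perm.extendDomain_apply_subtype _ _ (b := o) trivial]
  simp [Equiv.permCongr_apply, Equiv.subtypeUnivEquiv]

end Main

/-- For `x ∈ S(n+1)` with `y = p(x)` its canonical projection: `[x] = [y] + 1` if `x`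
fixes the last element, and `[x] = [y]` otherwise. -/
theorem stmt9 (n : ℕ) (x : Equiv.Perm (Fin (n + 1))) :
    (x (Fin.last n) = Fin.last n → cycleCount x = cycleCount (proj x) + 1) ∧
    (x (Fin.last n) ≠ Fin.last n → cycleCount x = cycleCount (proj x)) := by
  have hext := permCongr_eq_extendDomain n x
  have hct : Multiset.card (Equiv.Perm.cycleType (finSuccEquivLast.permCongr x)) =
      Multiset.card x.cycleType := by
    rw [hext, Equiv.Perm.cycleType_extendDomain]
  have hs : (Equiv.Perm.support (finSuccEquivLast.permCongr x)).card = x.support.card := by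
    rw [hext, Equiv.Perm.card_support_extend_domain]
  have hfx := fix_add_support (n + 1) x
  have hfy := fix_add_support n (proj x)
  have hτ : (Equiv.removeNone (finSuccEquivLast.permCongr x)) = proj x := rfl
  have hfixiff : (finSuccEquivLast.permCongr x) none = none ↔
      x (Fin.last n) = Fin.last n := by
    rw [Equiv.permCongr_apply, finSuccEquivLast_symm_none,
      Equiv.apply_eq_iff_eq_symm_apply, finSuccEquivLast_symm_none]
  constructor
  · intro h
    obtain ⟨h1, h2⟩ := caseA (finSuccEquivLast.permCongr x) (hfixiff.mpr h)
    rw [hτ] at h1 h2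
    unfold cycleCount
    omega
  · intro h
    have h3 := caseB (finSuccEquivLast.permCongr x) (fun hc => h (hfixiff.mp hc))
    rw [hτ] at h3
    unfold cycleCount
    omega
end

section
/- Let k be a nonzero integer, say k > 0. Then for a partition λ, the product ∏_{b∈λ}(k + c(b)) is nonzero if and only if λ has at most k rows. Similarly, ∏_{b∈λ}(−k + c(b)) is nonzero if and only if λ has at most k columns. -/
/-- For a nonzero integer `k > 0`: `∏_{b∈λ}(k + c(b)) ≠ 0` iff `λ` has at most `k` rows,
and `∏_{b∈λ}(−k + c(b)) ≠ 0` iff `λ` has at most `k` columns. -/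
theorem stmt13 (k : ℕ) (hk : 1 ≤ k) (μ : YoungDiagram) :
    ((∏ b ∈ μ.cells, ((k : ℤ) + ((b.2 : ℤ) - (b.1 : ℤ))) ≠ 0) ↔ μ.colLen 0 ≤ k) ∧
    ((∏ b ∈ μ.cells, (-(k : ℤ) + ((b.2 : ℤ) - (b.1 : ℤ))) ≠ 0) ↔ μ.rowLen 0 ≤ k) := by
  constructor
  · rw [Finset.prod_ne_zero_iff]
    constructor
    · intro h
      by_contra hle
      push_neg at hle
      have hmem : (k, 0) ∈ μ.cells := by
        rw [YoungDiagram.mem_cells, YoungDiagram.mem_iff_lt_colLen]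
        exact hle
      have := h _ hmem
      simp at this
    · intro hle b hb hzero
      rw [YoungDiagram.mem_cells] at hb
      have h1 : (b.1, 0) ∈ μ := μ.up_left_mem le_rfl (Nat.zero_le _) (by simpa using hb)
      have h2 : b.1 < μ.colLen 0 := (YoungDiagram.mem_iff_lt_colLen).mp h1
      have : b.1 < k := lt_of_lt_of_le h2 hle
      omega
  · rw [Finset.prod_ne_zero_iff]
    constructor
    · intro h
      by_contra hle
      push_neg at hle
      have hmem : (0, k) ∈ μ.cells := by
        rw [YoungDiagram.mem_cells, YoungDiagram.mem_iff_lt_rowLen]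
        exact hle
      have := h _ hmem
      simp at this
    · intro hle b hb hzero
      rw [YoungDiagram.mem_cells] at hb
      have h2 : b.2 < μ.rowLen b.1 := (YoungDiagram.mem_iff_lt_rowLen).mp (by simpa using hb)
      have h3 : b.2 < μ.rowLen 0 := lt_of_lt_of_le h2 (μ.rowLen_anti 0 b.1 (Nat.zero_le _))
      have : b.2 < k := lt_of_lt_of_le h3 hle
      omega
end

section
/- Fix p ≥ 1, and for a partition λ with at most p rows set l_i = λ_i + p − i (1 ≤ i ≤ p), and let V(l_1,…,l_p) = ∏_{1≤i<j≤p}(l_i − l_j). Then ∑_{i=1}^p (l_i + 1)·V(l_1,…,l_i+1,…,l_p) = (l_1+⋯+l_p + p(p+1)/2)·V(l_1,…,l_p) for any strictly decreasing sequence l_1 > l_2 > ⋯ > l_p ≥ 0 (in fact for all real l_1,…,l_p). -/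
open Matrix Finset

lemma prodV_eq (p : ℕ) (v : Fin p → ℝ) :
    ∏ a : Fin p, ∏ b ∈ Finset.Ioi a, (v a - v b)
      = (-1 : ℝ) ^ (∑ a : Fin p, (Finset.Ioi a).card) * det (Matrix.vandermonde v) := by
  rw [Matrix.det_vandermonde, ← Finset.prod_pow_eq_pow_sum, ← Finset.prod_mul_distrib]
  refine Finset.prod_congr rfl fun a _ => ?_
  rw [← Finset.prod_const, ← Finset.prod_mul_distrib]
  exact Finset.prod_congr rfl fun b _ => by ring

lemma sum_det_updateRow_mul (p : ℕ) (A B : Matrix (Fin p) (Fin p) ℝ) :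
    ∑ i, det (Matrix.updateRow A i ((A * B) i)) = det A * Matrix.trace B := by
  have h : ∀ i (b : Fin p → ℝ),
      det (Matrix.updateRow A i b) = ∑ j, Matrix.adjugate A j i * b j := by
    intro i b
    rw [← Matrix.cramer_transpose_apply, Matrix.cramer_eq_adjugate_mulVec,
      ← Matrix.adjugate_transpose]
    simp [Matrix.mulVec, dotProduct, Matrix.transpose_apply, mul_comm]
  calc ∑ i, det (Matrix.updateRow A i ((A * B) i))
      = Matrix.trace ((A * B) * Matrix.adjugate A) := by
        rw [Matrix.trace]
        simp only [h, Matrix.diag_apply, Matrix.mul_apply]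
        exact Finset.sum_congr rfl fun i _ => Finset.sum_congr rfl fun j _ => mul_comm _ _
    _ = Matrix.trace (B * (Matrix.adjugate A * A)) := by
        rw [Matrix.mul_assoc, Matrix.trace_mul_comm, Matrix.mul_assoc]
    _ = det A * Matrix.trace B := by
        rw [Matrix.adjugate_mul]
        simp

/-- Vandermonde identity behind pseudoharmonicity of `g_p`:
`∑_{i=1}^p (l_i + 1)·V(l_1,…,l_i+1,…,l_p) = (l_1+⋯+l_p + p(p+1)/2)·V(l_1,…,l_p)`
for all real `l_1,…,l_p`, where `V` is the Vandermonde product. -/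
theorem stmt15 (p : ℕ) (hp : 1 ≤ p) (l : Fin p → ℝ) :
    ∑ i : Fin p, (l i + 1) *
        ∏ a : Fin p, ∏ b ∈ Finset.Ioi a,
          (Function.update l i (l i + 1) a - Function.update l i (l i + 1) b)
      = ((∑ i : Fin p, l i) + p * (p + 1) / 2) *
          ∏ a : Fin p, ∏ b ∈ Finset.Ioi a, (l a - l b) := by
  classical
  set A := Matrix.vandermonde l with hA
  set B : Matrix (Fin p) (Fin p) ℝ :=
    Matrix.of (fun k j => if (k : ℕ) ≤ (j : ℕ) then (((j : ℕ) + 1).choose k : ℝ) else 0) with hB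
  have hAapp : ∀ i j : Fin p, A i j = l i ^ (j : ℕ) := fun i j => rfl
  have hAB : ∀ i j : Fin p, (A * B) i j = (l i + 1) ^ ((j : ℕ) + 1) - l i ^ ((j : ℕ) + 1) := by
    intro i j
    rw [Matrix.mul_apply]
    have h1 : ∑ k : Fin p, A i k * B k j
        = ∑ k ∈ Finset.range p, (if k ≤ (j : ℕ) then (((j : ℕ) + 1).choose k : ℝ) * l i ^ k else 0) := by
      rw [Finset.sum_range]
      refine Finset.sum_congr rfl fun k _ => ?_
      simp only [hB, Matrix.of_apply, hAapp]
      split <;> simp [mul_comm]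
    rw [h1, ← Finset.sum_subset (Finset.range_subset_range.2 j.2)
      (fun k _ hk2 => if_neg (fun hle => hk2 (Finset.mem_range.2 (Nat.lt_succ_of_le hle))))]
    · have h2 : ∑ k ∈ Finset.range ((j : ℕ) + 1),
          (if k ≤ (j : ℕ) then (((j : ℕ) + 1).choose k : ℝ) * l i ^ k else 0)
          = ∑ k ∈ Finset.range ((j : ℕ) + 1), (((j : ℕ) + 1).choose k : ℝ) * l i ^ k := by
        refine Finset.sum_congr rfl fun k hk => if_pos (by simpa [Nat.lt_succ_iff] using hk)
      have h3 : (l i + 1) ^ ((j : ℕ) + 1)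
          = ∑ k ∈ Finset.range ((j : ℕ) + 2), (((j : ℕ) + 1).choose k : ℝ) * l i ^ k := by
        rw [add_pow]
        exact Finset.sum_congr rfl fun k _ => by ring
      have h4 : ∑ k ∈ Finset.range ((j : ℕ) + 2), (((j : ℕ) + 1).choose k : ℝ) * l i ^ k
          = (∑ k ∈ Finset.range ((j : ℕ) + 1), (((j : ℕ) + 1).choose k : ℝ) * l i ^ k)
            + l i ^ ((j : ℕ) + 1) := by
        rw [Finset.sum_range_succ]; simp
      rw [h2, h3, h4]; ring
  have hupd : ∀ i : Fin p, Matrix.vandermonde (Function.update l i (l i + 1))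
      = Matrix.updateRow A i (fun j => (l i + 1) ^ (j : ℕ)) := by
    intro i
    ext a j
    by_cases h : a = i
    · subst h; simp [Matrix.vandermonde_apply]
    · simp [Matrix.vandermonde_apply, Matrix.updateRow_ne h, Function.update_of_ne h, hA]
  have step : ∀ i : Fin p, (l i + 1) * det (Matrix.vandermonde (Function.update l i (l i + 1)))
      = l i * det A + det (Matrix.updateRow A i ((A * B) i)) := by
    intro i
    rw [hupd i, ← Matrix.det_updateRow_smul]
    have hrow : (l i + 1) • (fun j : Fin p => (l i + 1) ^ (j : ℕ))
        = (fun j => (l i • A i) j + (A * B) i j) := by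
      funext j
      simp only [Pi.smul_apply, smul_eq_mul, hAB i j, hAapp]
      ring
    rw [hrow]
    have : Matrix.updateRow A i (fun j => (l i • A i) j + (A * B) i j)
        = Matrix.updateRow A i ((l i • A i) + (A * B) i) := rfl
    rw [this, Matrix.det_updateRow_add, Matrix.det_updateRow_smul, Matrix.updateRow_eq_self]
  have htr : Matrix.trace B = (p : ℝ) * (p + 1) / 2 := by
    have : Matrix.trace B = ∑ k : Fin p, ((k : ℕ) + 1 : ℝ) := by
      rw [Matrix.trace]
      refine Finset.sum_congr rfl fun k _ => ?_
      simp [hB, Matrix.diag_apply, Nat.choose_succ_self_right]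
    rw [this, Fin.sum_univ_eq_sum_range (fun k => ((k : ℕ) + 1 : ℝ)) p]
    have h3 : ∀ n : ℕ, ∑ k ∈ Finset.range n, ((k : ℝ) + 1) = n * (n + 1) / 2 := by
      intro n
      induction n with
      | zero => simp
      | succ m ih => rw [Finset.sum_range_succ, ih]; push_cast; ring
    exact h3 p
  have key : ∑ i : Fin p, (l i + 1) * det (Matrix.vandermonde (Function.update l i (l i + 1)))
      = ((∑ i : Fin p, l i) + (p : ℝ) * (p + 1) / 2) * det A := by
    calc ∑ i : Fin p, (l i + 1) * det (Matrix.vandermonde (Function.update l i (l i + 1)))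
        = ∑ i : Fin p, (l i * det A + det (Matrix.updateRow A i ((A * B) i))) :=
          Finset.sum_congr rfl fun i _ => step i
      _ = (∑ i : Fin p, l i) * det A + det A * Matrix.trace B := by
          rw [Finset.sum_add_distrib, ← Finset.sum_mul, sum_det_updateRow_mul]
      _ = ((∑ i : Fin p, l i) + (p : ℝ) * (p + 1) / 2) * det A := by rw [htr]; ring
  simp only [prodV_eq]
  calc ∑ i : Fin p, (l i + 1) * ((-1 : ℝ) ^ (∑ a : Fin p, (Finset.Ioi a).card) *
        det (Matrix.vandermonde (Function.update l i (l i + 1))))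
      = (-1 : ℝ) ^ (∑ a : Fin p, (Finset.Ioi a).card) *
          ∑ i : Fin p, (l i + 1) * det (Matrix.vandermonde (Function.update l i (l i + 1))) := by
        rw [Finset.mul_sum]; exact Finset.sum_congr rfl fun i _ => by ring
    _ = _ := by rw [key]; ring
end

section
/- Let p ≥ 1. The function 1/((α_1+β_1)(α_2+β_2)⋯(α_p+β_p)) is integrable with respect to Lebesgue measure on the standard (p+q−1)-dimensional simplex {α_i ≥ 0, β_j ≥ 0, ∑_{i=1}^p α_i + ∑_{j=1}^q β_j = 1} (q ≥ p). In fact, the pushforward of the measure with this density under the map (α;β) ↦ (α_1+β_1,…,α_p+β_p, β_{p+1},…,β_q) is Lebesgue measure on the image simplex. -/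
open MeasureTheory

/-- The standard `(m)`-coordinate simplex `{v ∈ ℝ^m : v_i ≥ 0, ∑ v_i ≤ 1}`, serving as a
coordinate chart (dropping the last barycentric coordinate) for the standard
`m`-dimensional simplex with its Lebesgue measure. -/
def simplexD (m : ℕ) : Set (Fin m → ℝ) :=
  {v | (∀ i, 0 ≤ v i) ∧ ∑ i, v i ≤ 1}

/-- The coordinates `β_1,…,β_q` of a point of the `(p+q−1)`-simplex
`{α_i ≥ 0, β_j ≥ 0, ∑α + ∑β = 1}` in the chart where `v = (α_1,…,α_p,β_1,…,β_{q−1})`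
and `β_q = 1 − ∑ v`. -/
noncomputable def betaOf (p q : ℕ) (v : Fin (p + q - 1) → ℝ) (j : Fin q) : ℝ :=
  if h : (j : ℕ) < q - 1 then v ⟨p + j, by omega⟩ else 1 - ∑ i, v i

/-- The density `1/((α_1+β_1)⋯(α_p+β_p))`. -/
noncomputable def densityF (p q : ℕ) (hp : 1 ≤ p) (hpq : p ≤ q) (v : Fin (p + q - 1) → ℝ) : ℝ :=
  1 / ∏ i : Fin p,
      (v ⟨i, by have := i.isLt; omega⟩ + betaOf p q v ⟨i, by have := i.isLt; omega⟩)

/-- The map `(α;β) ↦ (α_1+β_1,…,α_p+β_p, β_{p+1},…,β_q)`, in coordinate charts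
(the last coordinate of the image, being determined, is dropped). -/
noncomputable def projMap (p q : ℕ) (hp : 1 ≤ p) (hpq : p ≤ q) (v : Fin (p + q - 1) → ℝ)
    (j : Fin (q - 1)) : ℝ :=
  if hj : (j : ℕ) < p then
    v ⟨j, by have := j.isLt; omega⟩ + v ⟨p + j, by have := j.isLt; omega⟩
  else v ⟨p + j, by have := j.isLt; omega⟩

namespace Stmt17

variable (p q : ℕ)

/-- extension of `v` to `ℕ` by zero -/
noncomputable def Vex (v : Fin (p + q - 1) → ℝ) (k : ℕ) : ℝ :=
  if h : k < p + q - 1 then v ⟨k, h⟩ else 0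

/-- the "fiber length" function -/
noncomputable def tmap (s : Fin (q - 1) → ℝ) (i : Fin p) : ℝ :=
  if h : (i : ℕ) < q - 1 then s ⟨i, h⟩ else 1 - ∑ j, s j

/-- the full coordinate change -/
noncomputable def Emap (v : Fin (p + q - 1) → ℝ) : (Fin p → ℝ) × (Fin (q - 1) → ℝ) :=
  (fun i => Vex p q v i,
   fun j => if (j : ℕ) < p then Vex p q v (j : ℕ) + Vex p q v (p + j) else Vex p q v (p + j))

/-- the image region -/
def Sprod : Set ((Fin p → ℝ) × (Fin (q - 1) → ℝ)) :=
  {w | w.2 ∈ simplexD (q - 1) ∧ ∀ i, w.1 i ∈ Set.Icc 0 (tmap p q w.2 i)}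

variable {p q}

lemma vex_apply (v : Fin (p + q - 1) → ℝ) {k : ℕ} (hk : k < p + q - 1) :
    Vex p q v k = v ⟨k, hk⟩ := dif_pos hk

lemma vex_nonneg {v : Fin (p + q - 1) → ℝ} (hv : ∀ i, 0 ≤ v i) (k : ℕ) :
    0 ≤ Vex p q v k := by
  unfold Vex; split
  · exact hv _
  · exact le_refl 0

lemma emap_fst (v : Fin (p + q - 1) → ℝ) (i : Fin p) :
    (Emap p q v).1 i = Vex p q v i := rfl

lemma emap_snd (v : Fin (p + q - 1) → ℝ) (j : Fin (q - 1)) :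
    (Emap p q v).2 j
      = if (j : ℕ) < p then Vex p q v (j : ℕ) + Vex p q v (p + j)
        else Vex p q v (p + j) := rfl

lemma tmap_lt (s : Fin (q - 1) → ℝ) (i : Fin p) (h : (i : ℕ) < q - 1) :
    tmap p q s i = s ⟨i, h⟩ := dif_pos h

lemma tmap_ge (s : Fin (q - 1) → ℝ) (i : Fin p) (h : ¬ (i : ℕ) < q - 1) :
    tmap p q s i = 1 - ∑ j, s j := dif_neg h

lemma sum_fin_vex (v : Fin (p + q - 1) → ℝ) :
    ∑ k : Fin (p + q - 1), v k = ∑ k ∈ Finset.range (p + q - 1), Vex p q v k := by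
  rw [← Fin.sum_univ_eq_sum_range (fun k => Vex p q v k)]
  exact Finset.sum_congr rfl fun i _ => by rw [vex_apply v i.isLt]

lemma sum_split (hq : 1 ≤ q) (v : Fin (p + q - 1) → ℝ) :
    ∑ k ∈ Finset.range (p + q - 1), Vex p q v k
      = ∑ k ∈ Finset.range p, Vex p q v k
        + ∑ j ∈ Finset.range (q - 1), Vex p q v (p + j) := by
  have h : p + q - 1 = p + (q - 1) := by omega
  rw [h, Finset.sum_range_add]

lemma sum_snd (v : Fin (p + q - 1) → ℝ) :
    ∑ j : Fin (q - 1), (Emap p q v).2 j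
      = ∑ j ∈ Finset.range (q - 1), Vex p q v (p + j)
        + ∑ k ∈ Finset.range (min p (q - 1)), Vex p q v k := by
  have h1 : ∑ j : Fin (q - 1), (Emap p q v).2 j
      = ∑ j ∈ Finset.range (q - 1),
          (if j < p then Vex p q v j + Vex p q v (p + j) else Vex p q v (p + j)) :=
    Fin.sum_univ_eq_sum_range
      (fun j => if j < p then Vex p q v j + Vex p q v (p + j) else Vex p q v (p + j)) (q - 1)
  rw [h1]
  have h2 : ∀ j, (if j < p then Vex p q v j + Vex p q v (p + j) else Vex p q v (p + j))
      = Vex p q v (p + j) + (if j < p then Vex p q v j else 0) := by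
    intro j; split <;> ring
  simp_rw [h2, Finset.sum_add_distrib]
  congr 1
  rw [← Finset.sum_filter]
  congr 1
  ext k
  simp only [Finset.mem_filter, Finset.mem_range]
  omega

lemma factor_eq (hp : 1 ≤ p) (hpq : p ≤ q) (v : Fin (p + q - 1) → ℝ) (i : Fin p)
    (h1 : (i : ℕ) < p + q - 1) (h2 : (i : ℕ) < q) :
    v ⟨i, h1⟩ + betaOf p q v ⟨(i : ℕ), h2⟩ = tmap p q (Emap p q v).2 i := by
  unfold betaOf tmap
  by_cases hi : (i : ℕ) < q - 1
  · rw [dif_pos hi, dif_pos hi]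
    rw [show (Emap p q v).2 ⟨(i : ℕ), hi⟩
        = if (i : ℕ) < p then Vex p q v (i : ℕ) + Vex p q v (p + i) else Vex p q v (p + i)
      from rfl]
    rw [if_pos i.isLt, vex_apply v h1, vex_apply v (show p + (i : ℕ) < p + q - 1 by omega)]
  · rw [dif_neg hi, dif_neg hi]
    have hpq' : p = q := by have := i.isLt; omega
    have hieq : (i : ℕ) = q - 1 := by have := i.isLt; omega
    have hsum := sum_snd (p := p) (q := q) v
    have hsplit := sum_split (p := p) (le_trans hp hpq) v
    have hfin := sum_fin_vex (p := p) (q := q) v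
    have hmin : min p (q - 1) = q - 1 := by omega
    rw [hmin] at hsum
    have hps : p = (q - 1) + 1 := by omega
    have hlast : ∑ k ∈ Finset.range p, Vex p q v k
        = ∑ k ∈ Finset.range (q - 1), Vex p q v k + Vex p q v (q - 1) := by
      have hr : Finset.range p = Finset.range ((q - 1) + 1) := by rw [hps]
      rw [hr, Finset.sum_range_succ]
    have hv : v ⟨(i : ℕ), h1⟩ = Vex p q v (q - 1) := by
      rw [vex_apply v (show q - 1 < p + q - 1 by omega)]
      congr 1
      exact Fin.ext hieq
    rw [hsum, hv, hfin, hsplit, hlast]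
    ring

lemma density_eq (hp : 1 ≤ p) (hpq : p ≤ q) (v : Fin (p + q - 1) → ℝ) :
    densityF p q hp hpq v = 1 / ∏ i : Fin p, tmap p q (Emap p q v).2 i := by
  unfold densityF
  congr 1
  exact Finset.prod_congr rfl fun i _ => factor_eq hp hpq v i _ _

lemma proj_eq (hp : 1 ≤ p) (hpq : p ≤ q) (v : Fin (p + q - 1) → ℝ) :
    projMap p q hp hpq v = (Emap p q v).2 := by
  funext j
  unfold projMap
  rw [emap_snd]
  by_cases hj : (j : ℕ) < p
  · rw [dif_pos hj, if_pos hj,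
      vex_apply v (show (j : ℕ) < p + q - 1 from by have := j.isLt; omega),
      vex_apply v (show p + (j : ℕ) < p + q - 1 from by have := j.isLt; omega)]
  · rw [dif_neg hj, if_neg hj,
      vex_apply v (show p + (j : ℕ) < p + q - 1 from by have := j.isLt; omega)]

lemma mem_iff (hp : 1 ≤ p) (hpq : p ≤ q) (v : Fin (p + q - 1) → ℝ) :
    v ∈ simplexD (p + q - 1) ↔ Emap p q v ∈ Sprod p q := by
  have hq : 1 ≤ q := le_trans hp hpq
  have hfin := sum_fin_vex (p := p) (q := q) v
  have hsplit := sum_split (p := p) hq v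
  have hsum := sum_snd (p := p) (q := q) v
  constructor
  · rintro ⟨hnn, hsle⟩
    have nn : ∀ k, 0 ≤ Vex p q v k := vex_nonneg hnn
    have hMA : ∑ k ∈ Finset.range (min p (q - 1)), Vex p q v k
        ≤ ∑ k ∈ Finset.range p, Vex p q v k := by
      apply Finset.sum_le_sum_of_subset_of_nonneg
      · exact Finset.range_subset_range.2 (min_le_left _ _)
      · exact fun k _ _ => nn k
    refine ⟨⟨fun j => ?_, ?_⟩, fun i => ?_⟩
    · rw [emap_snd]; split
      · exact add_nonneg (nn _) (nn _)
      · exact nn _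
    · rw [hsum]
      rw [hfin, hsplit] at hsle
      linarith
    · refine ⟨nn _, ?_⟩
      rw [emap_fst]
      by_cases hi : (i : ℕ) < q - 1
      · rw [tmap_lt _ _ hi]
        rw [show (Emap p q v).2 ⟨(i : ℕ), hi⟩
            = if (i : ℕ) < p then Vex p q v (i : ℕ) + Vex p q v (p + i) else Vex p q v (p + i)
          from rfl, if_pos i.isLt]
        linarith [nn (p + (i : ℕ))]
      · rw [tmap_ge _ _ hi, hsum]
        have hpq' : p = q := by have := i.isLt; omega
        have hieq : (i : ℕ) = q - 1 := by have := i.isLt; omega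
        have hmin : min p (q - 1) = q - 1 := by omega
        have hps : p = (q - 1) + 1 := by omega
        have hlast : ∑ k ∈ Finset.range p, Vex p q v k
            = ∑ k ∈ Finset.range (q - 1), Vex p q v k + Vex p q v (q - 1) := by
          have hr : Finset.range p = Finset.range ((q - 1) + 1) := by rw [hps]
          rw [hr, Finset.sum_range_succ]
        rw [hfin, hsplit, hlast] at hsle
        rw [hmin]
        have : Vex p q v (i : ℕ) = Vex p q v (q - 1) := by rw [hieq]
        rw [this]
        linarith
  · rintro ⟨⟨hsnn, hsle⟩, hbound⟩
    have nnfst : ∀ i : Fin p, 0 ≤ Vex p q v (i : ℕ) := fun i => (hbound i).1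
    have nnsnd : ∀ j : Fin (q - 1), 0 ≤ Vex p q v (p + j) := by
      intro j
      have hj := hsnn j
      rw [emap_snd] at hj
      by_cases hjp : (j : ℕ) < p
      · rw [if_pos hjp] at hj
        have h2 := (hbound ⟨(j : ℕ), hjp⟩).2
        rw [emap_fst, tmap_lt _ _ (show ((⟨(j : ℕ), hjp⟩ : Fin p) : ℕ) < q - 1 from j.isLt)]
          at h2
        rw [show (Emap p q v).2 ⟨((⟨(j : ℕ), hjp⟩ : Fin p) : ℕ), j.isLt⟩
            = if (j : ℕ) < p then Vex p q v (j : ℕ) + Vex p q v (p + j) else Vex p q v (p + j)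
          from rfl, if_pos hjp] at h2
        linarith
      · rw [if_neg hjp] at hj
        exact hj
    constructor
    · intro k
      by_cases hk : (k : ℕ) < p
      · have := nnfst ⟨(k : ℕ), hk⟩
        rw [vex_apply v (show (k : ℕ) < p + q - 1 from k.isLt)] at this
        simpa using this
      · have hk2 : (k : ℕ) - p < q - 1 := by have := k.isLt; omega
        have := nnsnd ⟨(k : ℕ) - p, hk2⟩
        rw [vex_apply v (show p + ((k : ℕ) - p) < p + q - 1 from by have := k.isLt; omega)]
          at this
        have he : (⟨p + ((k : ℕ) - p), by have := k.isLt; omega⟩ : Fin (p + q - 1)) = k :=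
          Fin.ext (by simp only [Fin.val_mk]; omega)
        rwa [he] at this
    · rw [hfin, hsplit]
      rw [hsum] at hsle
      by_cases hpe : p ≤ q - 1
      · have hmin : min p (q - 1) = p := by omega
        rw [hmin] at hsle
        linarith
      · have hpq' : p = q := by omega
        have hmin : min p (q - 1) = q - 1 := by omega
        rw [hmin] at hsle
        have hps : p = (q - 1) + 1 := by omega
        have hlast : ∑ k ∈ Finset.range p, Vex p q v k
            = ∑ k ∈ Finset.range (q - 1), Vex p q v k + Vex p q v (q - 1) := by
          have hr : Finset.range p = Finset.range ((q - 1) + 1) := by rw [hps]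
          rw [hr, Finset.sum_range_succ]
        have hi : ¬ ((⟨q - 1, by omega⟩ : Fin p) : ℕ) < q - 1 := by simp
        have h2 := (hbound ⟨q - 1, by omega⟩).2
        rw [emap_fst, tmap_ge _ _ hi] at h2
        rw [hmin] at hsum
        rw [hsum] at h2
        simp only [Fin.val_mk] at h2
        rw [hlast]
        linarith
variable (p q) in
/-- the shear vector -/
noncomputable def cvec (α : Fin p → ℝ) (j : Fin (q - 1)) : ℝ :=
  if h : (j : ℕ) < p then α ⟨j, h⟩ else 0

lemma emap_measurePreserving (hp : 1 ≤ p) (hpq : p ≤ q) :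
    MeasurePreserving (Emap p q) volume (volume.prod volume) := by
  have hq : 1 ≤ q := le_trans hp hpq
  have hqe : p + (q - 1) = p + q - 1 := by omega
  set σ : Fin p ⊕ Fin (q - 1) ≃ Fin (p + q - 1) := finSumFinEquiv.trans (finCongr hqe) with hσ
  have e1 : MeasurePreserving
      ((MeasurableEquiv.piCongrLeft (fun _ : Fin (p + q - 1) => ℝ) σ).symm) volume volume :=
    (volume_measurePreserving_piCongrLeft (fun _ => ℝ) σ).symm _
  have e2 : MeasurePreserving
      (MeasurableEquiv.sumPiEquivProdPi (fun _ : Fin p ⊕ Fin (q - 1) => ℝ)) volume volume :=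
    volume_measurePreserving_sumPiEquivProdPi _
  have hΨ : MeasurePreserving
      (fun w : (Fin p → ℝ) × (Fin (q - 1) → ℝ) => (w.1, w.2 + cvec p q w.1))
      (volume.prod volume) (volume.prod volume) := by
    apply MeasurePreserving.skew_product (g := fun a b => b + cvec p q a)
      (MeasurePreserving.id volume)
    · apply Measurable.add
      · exact measurable_snd
      · have hc : Measurable (cvec p q) := by
          apply measurable_pi_lambda
          intro j
          unfold cvec
          by_cases h : (j : ℕ) < p
          · simp only [dif_pos h]
            exact measurable_pi_apply _
          · simp only [dif_neg h]
            exact measurable_const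
        exact hc.comp measurable_fst
    · exact Filter.Eventually.of_forall fun a => map_add_right_eq_self volume (cvec p q a)
  have comp := (hΨ.comp e2).comp e1
  have hfun : ((fun w : (Fin p → ℝ) × (Fin (q - 1) → ℝ) => (w.1, w.2 + cvec p q w.1)) ∘
      (MeasurableEquiv.sumPiEquivProdPi (fun _ : Fin p ⊕ Fin (q - 1) => ℝ)) ∘
      (MeasurableEquiv.piCongrLeft (fun _ : Fin (p + q - 1) => ℝ) σ).symm) = Emap p q := by
    funext v
    have hv : ∀ i : Fin p ⊕ Fin (q - 1),
        ((MeasurableEquiv.piCongrLeft (fun _ : Fin (p + q - 1) => ℝ) σ).symm v) i = v (σ i) :=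
      fun i => rfl
    have hσl : ∀ i : Fin p, ((σ (Sum.inl i) : Fin (p + q - 1)) : ℕ) = (i : ℕ) := by
      intro i; simp [hσ]
    have hσr : ∀ j : Fin (q - 1), ((σ (Sum.inr j) : Fin (p + q - 1)) : ℕ) = p + (j : ℕ) := by
      intro j; simp [hσ]
    have hvl : ∀ i : Fin p, v (σ (Sum.inl i)) = Vex p q v (i : ℕ) := by
      intro i
      rw [vex_apply v (show (i : ℕ) < p + q - 1 by omega)]
      exact congrArg v (Fin.ext (hσl i))
    have hvr : ∀ j : Fin (q - 1), v (σ (Sum.inr j)) = Vex p q v (p + (j : ℕ)) := by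
      intro j
      rw [vex_apply v (show p + (j : ℕ) < p + q - 1 by have := j.isLt; omega)]
      exact congrArg v (Fin.ext (hσr j))
    apply Prod.ext
    · funext i
      show v (σ (Sum.inl i)) = Vex p q v (i : ℕ)
      exact hvl i
    · funext j
      show v (σ (Sum.inr j)) + cvec p q (fun i => v (σ (Sum.inl i))) j = (Emap p q v).2 j
      rw [emap_snd, hvr j]
      by_cases h : (j : ℕ) < p
      · have hcv : cvec p q (fun i => v (σ (Sum.inl i))) j = Vex p q v (j : ℕ) := by
          unfold cvec
          rw [dif_pos h]
          exact hvl ⟨(j : ℕ), h⟩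
        rw [hcv, if_pos h]
        ring
      · have hcv : cvec p q (fun i => v (σ (Sum.inl i))) j = 0 := by
          unfold cvec
          rw [dif_neg h]
        rw [hcv, if_neg h, add_zero]
  rw [← hfun]
  exact comp

lemma measurableSet_simplexD (m : ℕ) : MeasurableSet (simplexD m) := by
  have : simplexD m = (⋂ i, {v : Fin m → ℝ | 0 ≤ v i}) ∩ {v : Fin m → ℝ | ∑ i, v i ≤ 1} := by
    ext v; simp [simplexD, Set.mem_iInter]
  rw [this]
  exact (MeasurableSet.iInter fun i =>
      measurableSet_le measurable_const (measurable_pi_apply i)).inter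
    (measurableSet_le (Finset.measurable_sum _ fun i _ => measurable_pi_apply i)
      measurable_const)

lemma measurable_tmap (i : Fin p) : Measurable (fun s : Fin (q - 1) → ℝ => tmap p q s i) := by
  unfold tmap
  by_cases h : (i : ℕ) < q - 1
  · simp only [dif_pos h]
    exact measurable_pi_apply _
  · simp only [dif_neg h]
    exact measurable_const.sub (Finset.measurable_sum _ fun j _ => measurable_pi_apply j)

lemma measurable_projMap (hp : 1 ≤ p) (hpq : p ≤ q) : Measurable (projMap p q hp hpq) := by
  apply measurable_pi_lambda
  intro j
  unfold projMap
  by_cases h : (j : ℕ) < p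
  · simp only [dif_pos h]
    exact (measurable_pi_apply _).add (measurable_pi_apply _)
  · simp only [dif_neg h]
    exact measurable_pi_apply _

lemma measurable_densityF (hp : 1 ≤ p) (hpq : p ≤ q) : Measurable (densityF p q hp hpq) := by
  unfold densityF
  apply Measurable.div measurable_const
  apply Finset.measurable_prod
  intro i _
  apply (measurable_pi_apply _).add
  have hb : ∀ v : Fin (p + q - 1) → ℝ, betaOf p q v ⟨(i : ℕ), by have := i.isLt; omega⟩
      = if h : (i : ℕ) < q - 1 then v ⟨p + (i : ℕ), by have := i.isLt; omega⟩
        else 1 - ∑ k, v k := by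
    intro v
    unfold betaOf
    rfl
  simp_rw [hb]
  by_cases h : (i : ℕ) < q - 1
  · simp only [dif_pos h]
    exact measurable_pi_apply _
  · simp only [dif_neg h]
    exact measurable_const.sub (Finset.measurable_sum _ fun j _ => measurable_pi_apply j)

lemma measurableSet_sprod : MeasurableSet (Sprod p q) := by
  have : Sprod p q = {w : (Fin p → ℝ) × (Fin (q - 1) → ℝ) | w.2 ∈ simplexD (q - 1)} ∩
      ⋂ i : Fin p, {w : (Fin p → ℝ) × (Fin (q - 1) → ℝ) |
        0 ≤ w.1 i ∧ w.1 i ≤ tmap p q w.2 i} := by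
    ext w
    exact ⟨fun h => ⟨h.1, Set.mem_iInter.2 h.2⟩, fun h => ⟨h.1, fun i => Set.mem_iInter.1 h.2 i⟩⟩
  rw [this]
  refine ((measurableSet_simplexD (q - 1)).preimage measurable_snd).inter
    (MeasurableSet.iInter fun i => ?_)
  exact (measurableSet_le measurable_const ((measurable_pi_apply i).comp measurable_fst)).inter
    (measurableSet_le ((measurable_pi_apply i).comp measurable_fst)
      ((measurable_tmap i).comp measurable_snd))

lemma tmap_nonneg {s : Fin (q - 1) → ℝ} (hs : s ∈ simplexD (q - 1)) (i : Fin p) :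
    0 ≤ tmap p q s i := by
  unfold tmap
  split
  · exact hs.1 _
  · have := hs.2; linarith

lemma null_tmap (hp : 1 ≤ p) (hpq : p ≤ q) :
    volume {s : Fin (q - 1) → ℝ | ∃ i : Fin p, tmap p q s i = 0} = 0 := by
  have hU : {s : Fin (q - 1) → ℝ | ∃ i : Fin p, tmap p q s i = 0}
      = ⋃ i : Fin p, {s : Fin (q - 1) → ℝ | tmap p q s i = 0} := by
    ext s; simp
  rw [hU]
  refine measure_iUnion_null fun i => ?_
  by_cases h : (i : ℕ) < q - 1
  · have hset : {s : Fin (q - 1) → ℝ | tmap p q s i = 0}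
        = Set.univ.pi (fun j : Fin (q - 1) =>
            if j = (⟨(i : ℕ), h⟩ : Fin (q - 1)) then ({0} : Set ℝ) else Set.univ) := by
      ext s
      simp only [Set.mem_setOf_eq, Set.mem_univ_pi, tmap_lt _ _ h]
      constructor
      · intro hs j
        by_cases hj : j = (⟨(i : ℕ), h⟩ : Fin (q - 1))
        · rw [if_pos hj, hj]; exact hs
        · rw [if_neg hj]; trivial
      · intro hs
        have := hs ⟨(i : ℕ), h⟩
        rwa [if_pos rfl] at this
    rw [hset, volume_pi_pi]
    exact Finset.prod_eq_zero (Finset.mem_univ (⟨(i : ℕ), h⟩ : Fin (q - 1))) (by simp)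
  · have hset : {s : Fin (q - 1) → ℝ | tmap p q s i = 0}
        = {s : Fin (q - 1) → ℝ | ∑ j, s j = 1} := by
      ext s
      simp only [Set.mem_setOf_eq, tmap_ge _ _ h]
      constructor <;> intro <;> linarith
    rw [hset]
    rcases Nat.eq_zero_or_pos (q - 1) with h0 | hpos
    · have : {s : Fin (q - 1) → ℝ | ∑ j, s j = 1} = ∅ := by
        ext s
        simp only [Set.mem_setOf_eq, Set.mem_empty_iff_false, iff_false]
        haveI : IsEmpty (Fin (q - 1)) := by rw [h0]; infer_instance
        rw [Finset.univ_eq_empty, Finset.sum_empty]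
        norm_num
      rw [this, measure_empty]
    · set L : (Fin (q - 1) → ℝ) →ₗ[ℝ] ℝ := ∑ j : Fin (q - 1), LinearMap.proj j with hL
      have hLapp : ∀ y : Fin (q - 1) → ℝ, L y = ∑ j, y j := by
        intro y
        rw [hL]
        simp [LinearMap.sum_apply, LinearMap.proj_apply]
      have hcard : ((q - 1 : ℕ) : ℝ) ≠ 0 := by
        exact_mod_cast hpos.ne'
      set x₀ : Fin (q - 1) → ℝ := fun _ => 1 / ((q - 1 : ℕ) : ℝ) with hx₀
      have hsx₀ : ∑ j, x₀ j = 1 := by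
        rw [hx₀]
        simp only [Finset.sum_const, Finset.card_univ, Fintype.card_fin, nsmul_eq_mul]
        field_simp
      have hker : LinearMap.ker L ≠ ⊤ := by
        intro hT
        have hL0 : L = 0 := LinearMap.ker_eq_top.1 hT
        have := hLapp x₀
        rw [hL0] at this
        simp only [LinearMap.zero_apply] at this
        rw [hsx₀] at this
        norm_num at this
      have hset2 : {s : Fin (q - 1) → ℝ | ∑ j, s j = 1}
          = (fun s => s + (-x₀)) ⁻¹' (LinearMap.ker L : Set (Fin (q - 1) → ℝ)) := by
        ext s
        simp only [Set.mem_setOf_eq, Set.mem_preimage, SetLike.mem_coe, LinearMap.mem_ker]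
        rw [hLapp]
        rw [show ∑ j, (s + (-x₀)) j = ∑ j, s j - ∑ j, x₀ j by
          rw [← Finset.sum_sub_distrib]; rfl]
        rw [hsx₀]
        constructor <;> intro <;> linarith
      rw [hset2, measure_preimage_add_right]
      exact Measure.addHaar_submodule volume _ hker

end Stmt17

open Stmt17 in
lemma stmt17_map_part {p q : ℕ} (hp : 1 ≤ p) (hpq : p ≤ q) :
    Measure.map (projMap p q hp hpq)
        ((volume.restrict (simplexD (p + q - 1))).withDensity
          fun v => ENNReal.ofReal (densityF p q hp hpq v))
      = volume.restrict (simplexD (q - 1)) := by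
  have hpm := measurable_projMap hp hpq
  have hS := measurableSet_simplexD (p + q - 1)
  ext A hA
  rw [Measure.map_apply hpm hA,
    withDensity_apply _ (hpm hA),
    Measure.restrict_restrict (hpm hA),
    Measure.restrict_apply hA]
  set B : Set (Fin (p + q - 1) → ℝ) := projMap p q hp hpq ⁻¹' A ∩ simplexD (p + q - 1) with hB
  set T : (Fin (q - 1) → ℝ) → ENNReal := fun s => ENNReal.ofReal (1 / ∏ i : Fin p, tmap p q s i)
    with hT
  set F : (Fin p → ℝ) × (Fin (q - 1) → ℝ) → ENNReal :=
    (Sprod p q ∩ Prod.snd ⁻¹' A).indicator (fun w => T w.2) with hF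
  have hTm : Measurable T := ENNReal.measurable_ofReal.comp
    (measurable_const.div (Finset.measurable_prod _ fun i _ => measurable_tmap i))
  have hFm : Measurable F :=
    (hTm.comp measurable_snd).indicator
      ((measurableSet_sprod).inter (hA.preimage measurable_snd))
  have hpoint : ∀ v, F (Emap p q v)
      = B.indicator (fun v => ENNReal.ofReal (densityF p q hp hpq v)) v := by
    intro v
    have hmemiff : Emap p q v ∈ Sprod p q ∩ Prod.snd ⁻¹' A ↔ v ∈ B := by
      rw [hB]
      constructor
      · rintro ⟨h1, h2⟩
        refine ⟨?_, (mem_iff hp hpq v).2 h1⟩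
        show projMap p q hp hpq v ∈ A
        rw [proj_eq hp hpq v]
        exact h2
      · rintro ⟨h1, h2⟩
        refine ⟨(mem_iff hp hpq v).1 h2, ?_⟩
        show (Emap p q v).2 ∈ A
        rw [← proj_eq hp hpq v]
        exact h1
    by_cases hv : v ∈ B
    · rw [Set.indicator_of_mem hv, hF, Set.indicator_of_mem (hmemiff.2 hv),
        density_eq hp hpq v]
    · rw [Set.indicator_of_notMem hv, hF,
        Set.indicator_of_notMem (fun hc => hv (hmemiff.1 hc))]
  calc ∫⁻ v in B, ENNReal.ofReal (densityF p q hp hpq v) ∂volume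
      = ∫⁻ v, F (Emap p q v) ∂volume := by
        rw [← lintegral_indicator ((hpm hA).inter hS)]
        exact lintegral_congr fun v => (hpoint v).symm
    _ = ∫⁻ w, F w ∂((volume : Measure (Fin p → ℝ)).prod volume) :=
        (emap_measurePreserving hp hpq).lintegral_comp hFm
    _ = ∫⁻ s, ∫⁻ α, F (α, s) ∂volume ∂volume := lintegral_prod_symm F hFm.aemeasurable
    _ = ∫⁻ s, (simplexD (q - 1) ∩ A).indicator
          (fun s => T s * ∏ i : Fin p, ENNReal.ofReal (tmap p q s i)) s ∂volume := by
        refine lintegral_congr fun s => ?_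
        by_cases hs : s ∈ simplexD (q - 1) ∩ A
        · rw [Set.indicator_of_mem hs]
          have hFe : ∀ α : Fin p → ℝ, F (α, s)
              = (Set.univ.pi fun i : Fin p => Set.Icc 0 (tmap p q s i)).indicator
                  (fun _ => T s) α := by
            intro α
            by_cases hα : α ∈ Set.univ.pi fun i : Fin p => Set.Icc 0 (tmap p q s i)
            · rw [Set.indicator_of_mem hα, hF,
                Set.indicator_of_mem
                  (show ((α, s) : (Fin p → ℝ) × (Fin (q - 1) → ℝ))
                      ∈ Sprod p q ∩ Prod.snd ⁻¹' A from
                    ⟨⟨hs.1, fun i => hα i (Set.mem_univ i)⟩, hs.2⟩)]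
            · rw [Set.indicator_of_notMem hα, hF,
                Set.indicator_of_notMem (fun hc => hα fun i _ => hc.1.2 i)]
          simp_rw [hFe]
          rw [lintegral_indicator_const (MeasurableSet.univ_pi fun i => measurableSet_Icc)]
          rw [volume_pi_pi]
          congr 1
          refine Finset.prod_congr rfl fun i _ => ?_
          rw [Real.volume_Icc, sub_zero]
        · rw [Set.indicator_of_notMem hs]
          have hFe : ∀ α : Fin p → ℝ, F (α, s) = 0 := by
            intro α
            rw [hF, Set.indicator_of_notMem]
            intro hc
            exact hs ⟨hc.1.1, hc.2⟩
          simp_rw [hFe]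
          exact lintegral_zero
    _ = ∫⁻ s, (simplexD (q - 1) ∩ A).indicator (fun _ => (1 : ENNReal)) s ∂volume := by
        refine lintegral_congr_ae ?_
        have hnull : ∀ᵐ s : Fin (q - 1) → ℝ ∂volume,
            s ∉ {s : Fin (q - 1) → ℝ | ∃ i : Fin p, tmap p q s i = 0} :=
          measure_eq_zero_iff_ae_notMem.1 (null_tmap hp hpq)
        filter_upwards [hnull] with s hs
        by_cases hmem : s ∈ simplexD (q - 1) ∩ A
        · rw [Set.indicator_of_mem hmem, Set.indicator_of_mem hmem]
          have hpos : ∀ i : Fin p, 0 < tmap p q s i := by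
            intro i
            rcases lt_or_eq_of_le (tmap_nonneg hmem.1 i) with h | h
            · exact h
            · exact absurd ⟨i, h.symm⟩ hs
          have hprod : 0 < ∏ i : Fin p, tmap p q s i :=
            Finset.prod_pos fun i _ => hpos i
          show ENNReal.ofReal (1 / ∏ i : Fin p, tmap p q s i)
              * ∏ i : Fin p, ENNReal.ofReal (tmap p q s i) = 1
          rw [← ENNReal.ofReal_prod_of_nonneg (fun i _ => (hpos i).le),
            ← ENNReal.ofReal_mul (by positivity), one_div,
            inv_mul_cancel₀ hprod.ne', ENNReal.ofReal_one]
        · rw [Set.indicator_of_notMem hmem, Set.indicator_of_notMem hmem]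
    _ = volume (A ∩ simplexD (q - 1)) := by
        rw [lintegral_indicator_const ((measurableSet_simplexD (q - 1)).inter hA),
          one_mul, Set.inter_comm]

open Stmt17 in
/-- The function `1/((α_1+β_1)⋯(α_p+β_p))` is integrable with respect to Lebesgue measure
on the standard `(p+q−1)`-dimensional simplex `{α_i ≥ 0, β_j ≥ 0, ∑α + ∑β = 1}` (`q ≥ p`);
in fact the pushforward of the measure with this density under
`(α;β) ↦ (α_1+β_1,…,α_p+β_p, β_{p+1},…,β_q)` is Lebesgue measure on the image simplex. -/
theorem stmt17 (p q : ℕ) (hp : 1 ≤ p) (hpq : p ≤ q) :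
    IntegrableOn (densityF p q hp hpq) (simplexD (p + q - 1)) volume ∧
    Measure.map (projMap p q hp hpq)
        ((volume.restrict (simplexD (p + q - 1))).withDensity
          fun v => ENNReal.ofReal (densityF p q hp hpq v))
      = volume.restrict (simplexD (q - 1)) := by
  have h2 := stmt17_map_part hp hpq
  refine ⟨?_, h2⟩
  have hS := measurableSet_simplexD (p + q - 1)
  have hd0 : ∀ v ∈ simplexD (p + q - 1), 0 ≤ densityF p q hp hpq v := by
    intro v hv
    unfold densityF
    apply one_div_nonneg.2
    apply Finset.prod_nonneg
    intro i _
    apply add_nonneg (hv.1 _)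
    unfold betaOf
    split
    · exact hv.1 _
    · have := hv.2; linarith
  have hnn : (0 : (Fin (p + q - 1) → ℝ) → ℝ)
      ≤ᵐ[volume.restrict (simplexD (p + q - 1))] densityF p q hp hpq :=
    (ae_restrict_iff' hS).2 (Filter.Eventually.of_forall fun v hv => hd0 v hv)
  refine ⟨(measurable_densityF hp hpq).aestronglyMeasurable, ?_⟩
  rw [hasFiniteIntegral_iff_ofReal hnn]
  have key : ∫⁻ v, ENNReal.ofReal (densityF p q hp hpq v)
        ∂(volume.restrict (simplexD (p + q - 1)))
      = volume (simplexD (q - 1)) := by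
    calc ∫⁻ v, ENNReal.ofReal (densityF p q hp hpq v)
          ∂(volume.restrict (simplexD (p + q - 1)))
        = ((volume.restrict (simplexD (p + q - 1))).withDensity
            fun v => ENNReal.ofReal (densityF p q hp hpq v)) Set.univ := by
          rw [withDensity_apply _ MeasurableSet.univ, Measure.restrict_univ]
      _ = (Measure.map (projMap p q hp hpq)
            ((volume.restrict (simplexD (p + q - 1))).withDensity
              fun v => ENNReal.ofReal (densityF p q hp hpq v))) Set.univ := by
          rw [Measure.map_apply (measurable_projMap hp hpq) MeasurableSet.univ,
            Set.preimage_univ]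
      _ = volume (simplexD (q - 1)) := by
          rw [h2, Measure.restrict_apply MeasurableSet.univ, Set.univ_inter]
  rw [key]
  refine lt_of_le_of_lt (measure_mono (show simplexD (q - 1)
      ⊆ Set.univ.pi fun _ : Fin (q - 1) => Set.Icc (0 : ℝ) 1 from ?_)) ?_
  · intro v hv i _
    exact ⟨hv.1 i,
      le_trans (Finset.single_le_sum (fun j _ => hv.1 j) (Finset.mem_univ i)) hv.2⟩
  · have h1 : volume (Set.Icc (0 : ℝ) 1) = 1 := by
      rw [Real.volume_Icc]
      norm_num
    rw [volume_pi_pi]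
    simp only [h1, Finset.prod_const_one]
    exact ENNReal.one_lt_top
end
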